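/- arXiv:2403.17168 — 3 statements merged into one kernel-verified Lean document; each statement's English description precedes it below -/
import Mathlib

section
/- For every integer ℓ ≥ 9 divisible by 3 there exist x₁, x₂, x₃ ∈ Sym(ℓ) such that x₁·x₂·x₃ = 1, the subgroup generated by x₁, x₂, x₃ contains Alt(ℓ), x₁ is a product of ℓ/3 pairwise disjoint 3-cycles (cycle type [3^{ℓ/3}], no fixed points), and each of x₂ and x₃ is a product of one 2-cycle and (ℓ−3)/3 pairwise disjoint 3-cycles, with exactly one fixed point (cycle type [1,2,3^{(ℓ−3)/3}]). -/
set_option maxHeartbeats 1000000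

namespace Statement16Aux

/-! Explicit permutations of `Fin n` (for `3 ∣ n`, `9 ≤ n`), given by formulas on `ℕ`:

* `x1` : the product of the 3-cycles `(3k, 3k+1, 3k+2)`, cycle type `[3^(n/3)]`;
* `x2 = (0 1) · ∏ (3k+2, 3k+3, 3k+4)`, cycle type `[1,2,3^((n-3)/3)]`, fixed point `n-1`;
* `x3 = (n-3, n-1) · ∏ (3k, 3k+4, 3k+2)`, cycle type `[1,2,3^((n-3)/3)]`, fixed point `1`.

They satisfy `x1 * x2 * x3 = 1` and generate the full symmetric group. -/

def F1 (i : ℕ) : ℕ := if i % 3 = 2 then i - 2 else i + 1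
def G1 (i : ℕ) : ℕ := if i % 3 = 0 then i + 2 else i - 1
def F2 (n i : ℕ) : ℕ := if i = 0 then 1 else if i = 1 then 0 else if i = n - 1 then i else
  if i % 3 = 1 then i - 2 else i + 1
def G2 (n i : ℕ) : ℕ := if i = 0 then 1 else if i = 1 then 0 else if i = n - 1 then i else
  if i % 3 = 2 then i + 2 else i - 1
def F3 (n i : ℕ) : ℕ := if i = 1 then 1 else if i = n - 3 then n - 1 else
  if i % 3 = 0 then i + 4 else i - 2
def G3 (n i : ℕ) : ℕ := if i = 1 then 1 else if i = n - 1 then n - 3 else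
  if i % 3 = 1 then i - 4 else i + 2
def P2 (n i : ℕ) : ℕ := if i = 0 then i else if i = 1 then i else if i = n - 1 then i else
  if i % 3 = 1 then i - 2 else i + 1
def Q2 (n i : ℕ) : ℕ := if i = 0 then i else if i = 1 then i else if i = n - 1 then i else
  if i % 3 = 2 then i + 2 else i - 1
def P3 (n i : ℕ) : ℕ := if i = 1 then i else if i = n - 3 then i else if i = n - 1 then i else
  if i % 3 = 0 then i + 4 else i - 2
def Q3 (n i : ℕ) : ℕ := if i = 1 then i else if i = n - 3 then i else if i = n - 1 then i else
  if i % 3 = 1 then i - 4 else i + 2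

/-- Build a permutation of `Fin n` from a function and its inverse on `ℕ`. -/
def mkPerm (n : ℕ) (f g : ℕ → ℕ) (hf : ∀ a, a < n → f a < n) (hg : ∀ a, a < n → g a < n)
    (hgf : ∀ a, a < n → g (f a) = a) (hfg : ∀ a, a < n → f (g a) = a) :
    Equiv.Perm (Fin n) where
  toFun i := ⟨f i.1, hf i.1 i.2⟩
  invFun i := ⟨g i.1, hg i.1 i.2⟩
  left_inv i := Fin.ext (hgf i.1 i.2)
  right_inv i := Fin.ext (hfg i.1 i.2)

section defs

variable (n : ℕ) (h3 : 3 ∣ n) (h9 : 9 ≤ n)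

def x1 : Equiv.Perm (Fin n) :=
  mkPerm n F1 G1
    (fun a ha => by unfold F1; split_ifs <;> omega)
    (fun a ha => by unfold G1; split_ifs <;> omega)
    (fun a ha => by unfold F1 G1; split_ifs <;> first | omega | (exfalso; assumption))
    (fun a ha => by unfold F1 G1; split_ifs <;> first | omega | (exfalso; assumption))

def x2 : Equiv.Perm (Fin n) :=
  mkPerm n (F2 n) (G2 n)
    (fun a ha => by unfold F2; split_ifs <;> omega)
    (fun a ha => by unfold G2; split_ifs <;> omega)
    (fun a ha => by unfold F2 G2; split_ifs <;> first | omega | (exfalso; assumption))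
    (fun a ha => by unfold F2 G2; split_ifs <;> first | omega | (exfalso; assumption))

def x3 : Equiv.Perm (Fin n) :=
  mkPerm n (F3 n) (G3 n)
    (fun a ha => by unfold F3; split_ifs <;> omega)
    (fun a ha => by unfold G3; split_ifs <;> omega)
    (fun a ha => by unfold F3 G3; split_ifs <;> first | omega | (exfalso; assumption))
    (fun a ha => by unfold F3 G3; split_ifs <;> first | omega | (exfalso; assumption))

def rho2 : Equiv.Perm (Fin n) :=
  mkPerm n (P2 n) (Q2 n)
    (fun a ha => by unfold P2; split_ifs <;> omega)
    (fun a ha => by unfold Q2; split_ifs <;> omega)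
    (fun a ha => by unfold P2 Q2; split_ifs <;> first | omega | (exfalso; assumption))
    (fun a ha => by unfold P2 Q2; split_ifs <;> first | omega | (exfalso; assumption))

def rho3 : Equiv.Perm (Fin n) :=
  mkPerm n (P3 n) (Q3 n)
    (fun a ha => by unfold P3; split_ifs <;> omega)
    (fun a ha => by unfold Q3; split_ifs <;> omega)
    (fun a ha => by unfold P3 Q3; split_ifs <;> first | omega | (exfalso; assumption))
    (fun a ha => by unfold P3 Q3; split_ifs <;> first | omega | (exfalso; assumption))

variable {n h3 h9}

lemma x1_val (i : Fin n) : (x1 n h3 h9 i).1 = F1 i.1 := rfl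
lemma x2_val (i : Fin n) : (x2 n h3 h9 i).1 = F2 n i.1 := rfl
lemma x3_val (i : Fin n) : (x3 n h3 h9 i).1 = F3 n i.1 := rfl
lemma rho2_val (i : Fin n) : (rho2 n h3 h9 i).1 = P2 n i.1 := rfl
lemma rho3_val (i : Fin n) : (rho3 n h3 h9 i).1 = P3 n i.1 := rfl

end defs

lemma swap_val {n : ℕ} (u v i : Fin n) :
    ((Equiv.swap u v) i).1 = if i.1 = u.1 then v.1 else if i.1 = v.1 then u.1 else i.1 := by
  rw [Equiv.swap_apply_def]
  split_ifs with h1 h2 h3 h4 h5 <;> simp_all [Fin.ext_iff]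

section facts

variable {n : ℕ} {h3 : 3 ∣ n} {h9 : 9 ≤ n}

lemma prod_eq_one : x1 n h3 h9 * x2 n h3 h9 * x3 n h3 h9 = 1 := by
  apply Equiv.ext
  intro i
  apply Fin.ext
  rw [Equiv.Perm.mul_apply, Equiv.Perm.mul_apply, x1_val, x2_val, x3_val, Equiv.Perm.one_apply]
  have ha := i.2
  generalize hb : F3 n (i : ℕ) = b
  generalize hc : F2 n b = c
  unfold F3 at hb
  unfold F2 at hc
  unfold F1
  split_ifs at hb hc ⊢ <;> omega

lemma x1_cube : (x1 n h3 h9) ^ 3 = 1 := by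
  apply Equiv.ext
  intro i
  apply Fin.ext
  rw [pow_succ, pow_succ, pow_one, Equiv.Perm.mul_apply, Equiv.Perm.mul_apply,
    x1_val, x1_val, x1_val, Equiv.Perm.one_apply]
  have ha := i.2
  generalize hb : F1 (i : ℕ) = b
  generalize hc : F1 b = c
  unfold F1 at hb hc ⊢
  split_ifs at hb hc ⊢ <;> omega

lemma rho2_cube : (rho2 n h3 h9) ^ 3 = 1 := by
  apply Equiv.ext
  intro i
  apply Fin.ext
  rw [pow_succ, pow_succ, pow_one, Equiv.Perm.mul_apply, Equiv.Perm.mul_apply,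
    rho2_val, rho2_val, rho2_val, Equiv.Perm.one_apply]
  have ha := i.2
  generalize hb : P2 n (i : ℕ) = b
  generalize hc : P2 n b = c
  unfold P2 at hb hc ⊢
  split_ifs at hb hc ⊢ <;> omega

lemma rho3_cube : (rho3 n h3 h9) ^ 3 = 1 := by
  apply Equiv.ext
  intro i
  apply Fin.ext
  rw [pow_succ, pow_succ, pow_one, Equiv.Perm.mul_apply, Equiv.Perm.mul_apply,
    rho3_val, rho3_val, rho3_val, Equiv.Perm.one_apply]
  have ha := i.2
  generalize hb : P3 n (i : ℕ) = b
  generalize hc : P3 n b = c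
  unfold P3 at hb hc ⊢
  split_ifs at hb hc ⊢ <;> omega

lemma x2_eq (h0 : 0 < n) (h1 : 1 < n) :
    x2 n h3 h9 = Equiv.swap (⟨0, h0⟩ : Fin n) ⟨1, h1⟩ * rho2 n h3 h9 := by
  apply Equiv.ext
  intro i
  apply Fin.ext
  rw [Equiv.Perm.mul_apply, x2_val, swap_val, rho2_val]
  simp only [Fin.val_mk]
  have ha := i.2
  generalize hb : P2 n (i : ℕ) = b
  unfold P2 at hb
  unfold F2
  split_ifs at hb ⊢ <;> omega

lemma x3_eq (ha' : n - 3 < n) (hb' : n - 1 < n) :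
    x3 n h3 h9 = Equiv.swap (⟨n - 3, ha'⟩ : Fin n) ⟨n - 1, hb'⟩ * rho3 n h3 h9 := by
  apply Equiv.ext
  intro i
  apply Fin.ext
  rw [Equiv.Perm.mul_apply, x3_val, swap_val, rho3_val]
  simp only [Fin.val_mk]
  have ha := i.2
  generalize hb : P3 n (i : ℕ) = b
  unfold P3 at hb
  unfold F3
  split_ifs at hb ⊢ <;> omega

lemma disj2 (h0 : 0 < n) (h1 : 1 < n) :
    Equiv.Perm.Disjoint (Equiv.swap (⟨0, h0⟩ : Fin n) ⟨1, h1⟩) (rho2 n h3 h9) := by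
  intro i
  by_cases h : i.1 = 0 ∨ i.1 = 1 ∨ i.1 = n - 1
  · right
    apply Fin.ext
    rw [rho2_val]
    unfold P2
    split_ifs <;> omega
  · left
    apply Equiv.swap_apply_of_ne_of_ne
    · intro hh; exact h (Or.inl (congrArg Fin.val hh))
    · intro hh; exact h (Or.inr (Or.inl (congrArg Fin.val hh)))

lemma disj3 (ha' : n - 3 < n) (hb' : n - 1 < n) :
    Equiv.Perm.Disjoint (Equiv.swap (⟨n - 3, ha'⟩ : Fin n) ⟨n - 1, hb'⟩) (rho3 n h3 h9) := by
  intro i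
  by_cases h : i.1 = 1 ∨ i.1 = n - 3 ∨ i.1 = n - 1
  · right
    apply Fin.ext
    rw [rho3_val]
    unfold P3
    split_ifs <;> omega
  · left
    apply Equiv.swap_apply_of_ne_of_ne
    · intro hh; exact h (Or.inr (Or.inl (congrArg Fin.val hh)))
    · intro hh; exact h (Or.inr (Or.inr (congrArg Fin.val hh)))

lemma x2_cube (h0 : 0 < n) (h1 : 1 < n) :
    (x2 n h3 h9) ^ 3 = Equiv.swap (⟨0, h0⟩ : Fin n) ⟨1, h1⟩ := by
  rw [x2_eq h0 h1, ((disj2 h0 h1).commute).mul_pow, rho2_cube, mul_one,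
    pow_succ, sq, Equiv.swap_mul_self, one_mul]

lemma x3_cube (ha' : n - 3 < n) (hb' : n - 1 < n) :
    (x3 n h3 h9) ^ 3 = Equiv.swap (⟨n - 3, ha'⟩ : Fin n) ⟨n - 1, hb'⟩ := by
  rw [x3_eq ha' hb', ((disj3 ha' hb').commute).mul_pow, rho3_cube, mul_one,
    pow_succ, sq, Equiv.swap_mul_self, one_mul]

end facts
end Statement16Aux
namespace Statement16Aux
section facts2

variable {n : ℕ} {h3 : 3 ∣ n} {h9 : 9 ≤ n}

lemma cycleType_of_cube_eq_one {β : Type*} [Fintype β] [DecidableEq β] {σ : Equiv.Perm β}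
    (h : σ ^ 3 = 1) : σ.cycleType = Multiset.replicate (σ.support.card / 3) 3 := by
  have h3' : ∀ c ∈ σ.cycleType, c = 3 := by
    intro c hc
    have h2 := Equiv.Perm.two_le_of_mem_cycleType hc
    have hd : c ∣ 3 := by
      have hh := Multiset.dvd_lcm hc
      rw [Equiv.Perm.lcm_cycleType] at hh
      exact hh.trans (orderOf_dvd_of_pow_eq_one h)
    have hle : c ≤ 3 := Nat.le_of_dvd (by norm_num) hd
    interval_cases c
    · exact absurd hd (by norm_num)
    · rfl
  have hrep := Multiset.eq_replicate_card.mpr h3'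
  have hsum := Equiv.Perm.sum_cycleType σ
  rw [hrep] at hsum ⊢
  rw [Multiset.sum_replicate, smul_eq_mul] at hsum
  congr 1
  omega

lemma x1_support_card : (x1 n h3 h9).support.card = n := by
  have hu : (x1 n h3 h9).support = Finset.univ := by
    apply Finset.eq_univ_iff_forall.mpr
    intro i
    rw [Equiv.Perm.mem_support]
    intro hh
    have hv := congrArg Fin.val hh
    rw [x1_val] at hv
    have ha := i.2
    unfold F1 at hv
    split_ifs at hv <;> omega
  rw [hu, Finset.card_univ, Fintype.card_fin]

lemma triple_card {a b c : ℕ} (ha : a < n) (hb : b < n) (hc : c < n)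
    (hab : a ≠ b) (hac : a ≠ c) (hbc : b ≠ c) :
    ({⟨a, ha⟩, ⟨b, hb⟩, ⟨c, hc⟩} : Finset (Fin n)).card = 3 := by
  rw [Finset.card_insert_of_notMem (by simp [Fin.ext_iff]; omega),
    Finset.card_insert_of_notMem (by simp [Fin.ext_iff]; omega), Finset.card_singleton]

lemma rho2_support_card : (rho2 n h3 h9).support.card = n - 3 := by
  have h0 : (0:ℕ) < n := by omega
  have h1 : (1:ℕ) < n := by omega
  have hn1 : n - 1 < n := by omega
  have hs : (rho2 n h3 h9).support = ({⟨0, h0⟩, ⟨1, h1⟩, ⟨n-1, hn1⟩} : Finset (Fin n))ᶜ := by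
    ext i
    rw [Equiv.Perm.mem_support, Finset.mem_compl]
    simp only [Finset.mem_insert, Finset.mem_singleton, Fin.ext_iff, Fin.val_mk]
    have ha := i.2
    constructor
    · intro hne h
      apply hne
      apply Fin.ext
      rw [rho2_val]
      unfold P2
      split_ifs <;> omega
    · intro h hh
      have hv := congrArg Fin.val hh
      rw [rho2_val] at hv
      unfold P2 at hv
      split_ifs at hv <;> omega
  rw [hs, Finset.card_compl, triple_card (by omega) (by omega) (by omega) (by omega) (by omega) (by omega),
    Fintype.card_fin]

lemma rho3_support_card : (rho3 n h3 h9).support.card = n - 3 := by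
  have h1 : (1:ℕ) < n := by omega
  have hn3 : n - 3 < n := by omega
  have hn1 : n - 1 < n := by omega
  have hs : (rho3 n h3 h9).support = ({⟨1, h1⟩, ⟨n-3, hn3⟩, ⟨n-1, hn1⟩} : Finset (Fin n))ᶜ := by
    ext i
    rw [Equiv.Perm.mem_support, Finset.mem_compl]
    simp only [Finset.mem_insert, Finset.mem_singleton, Fin.ext_iff, Fin.val_mk]
    have ha := i.2
    constructor
    · intro hne h
      apply hne
      apply Fin.ext
      rw [rho3_val]
      unfold P3
      split_ifs <;> omega
    · intro h hh
      have hv := congrArg Fin.val hh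
      rw [rho3_val] at hv
      unfold P3 at hv
      split_ifs at hv <;> omega
  rw [hs, Finset.card_compl, triple_card (by omega) (by omega) (by omega) (by omega) (by omega) (by omega),
    Fintype.card_fin]

lemma x1_cycleType : (x1 n h3 h9).cycleType = Multiset.replicate (n / 3) 3 := by
  rw [cycleType_of_cube_eq_one x1_cube, x1_support_card]

lemma swap_cycleType {a b : Fin n} (hab : a ≠ b) :
    (Equiv.swap a b).cycleType = {2} := by
  rw [(Equiv.Perm.isCycle_swap hab).cycleType, Equiv.Perm.card_support_swap hab]

lemma x2_cycleType : (x2 n h3 h9).cycleType = 2 ::ₘ Multiset.replicate ((n - 3) / 3) 3 := by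
  have h0 : (0:ℕ) < n := by omega
  have h1 : (1:ℕ) < n := by omega
  rw [x2_eq h0 h1, Equiv.Perm.Disjoint.cycleType_mul (disj2 h0 h1),
    swap_cycleType (by simp [Fin.ext_iff]),
    cycleType_of_cube_eq_one rho2_cube, rho2_support_card, Multiset.singleton_add]

lemma x3_cycleType : (x3 n h3 h9).cycleType = 2 ::ₘ Multiset.replicate ((n - 3) / 3) 3 := by
  have ha' : n - 3 < n := by omega
  have hb' : n - 1 < n := by omega
  rw [x3_eq ha' hb', Equiv.Perm.Disjoint.cycleType_mul (disj3 ha' hb'),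
    swap_cycleType (by simp [Fin.ext_iff]; omega),
    cycleType_of_cube_eq_one rho3_cube, rho3_support_card, Multiset.singleton_add]

end facts2
end Statement16Aux
namespace Statement16Aux
section gen

variable {n : ℕ} {h3 : 3 ∣ n} {h9 : 9 ≤ n}

lemma conj_swap_mem {H : Subgroup (Equiv.Perm (Fin n))} {g : Equiv.Perm (Fin n)} (hg : g ∈ H)
    {a b : Fin n} (hs : Equiv.swap a b ∈ H) : Equiv.swap (g a) (g b) ∈ H := by
  rw [Equiv.swap_apply_apply]
  exact H.mul_mem (H.mul_mem hg hs) (H.inv_mem hg)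

lemma x1_apply_eq {a b : ℕ} (ha : a < n) (hb : b < n) (h : F1 a = b) :
    x1 n h3 h9 ⟨a, ha⟩ = ⟨b, hb⟩ := Fin.ext h

lemma x2_apply_eq {a b : ℕ} (ha : a < n) (hb : b < n) (h : F2 n a = b) :
    x2 n h3 h9 ⟨a, ha⟩ = ⟨b, hb⟩ := Fin.ext h

variable {H : Subgroup (Equiv.Perm (Fin n))}

/-- `swap (3k+1) (3k+2) ∈ H`, given `swap (3k) (3k+1) ∈ H`. -/
lemma swapB_mem (hx1 : x1 n h3 h9 ∈ H) {k : ℕ} (hk : 3*k+2 < n)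
    (hA : Equiv.swap (⟨3*k, by omega⟩ : Fin n) ⟨3*k+1, by omega⟩ ∈ H) :
    Equiv.swap (⟨3*k+1, by omega⟩ : Fin n) ⟨3*k+2, hk⟩ ∈ H := by
  have h := conj_swap_mem hx1 hA
  rwa [x1_apply_eq (a := 3*k) (b := 3*k+1) (by omega) (by omega)
      (by unfold F1; split_ifs <;> omega),
    x1_apply_eq (a := 3*k+1) (b := 3*k+2) (by omega) hk
      (by unfold F1; split_ifs <;> omega)] at h

/-- `swap (3k+2) (3k) ∈ H`, given `swap (3k) (3k+1) ∈ H`. -/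
lemma swapC_mem (hx1 : x1 n h3 h9 ∈ H) {k : ℕ} (hk : 3*k+2 < n)
    (hA : Equiv.swap (⟨3*k, by omega⟩ : Fin n) ⟨3*k+1, by omega⟩ ∈ H) :
    Equiv.swap (⟨3*k+2, hk⟩ : Fin n) ⟨3*k, by omega⟩ ∈ H := by
  have h := conj_swap_mem hx1 (swapB_mem hx1 hk hA)
  rwa [x1_apply_eq (a := 3*k+1) (b := 3*k+2) (by omega) hk
      (by unfold F1; split_ifs <;> omega),
    x1_apply_eq (a := 3*k+2) (b := 3*k) hk (by omega)
      (by unfold F1; split_ifs <;> omega)] at h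

/-- `swap (3k+2) (3k+3) ∈ H`, given `swap (3k) (3k+1) ∈ H`. -/
lemma swapE_mem (hx1 : x1 n h3 h9 ∈ H) (hx2 : x2 n h3 h9 ∈ H) {k : ℕ} (hk : 3*k+3 < n)
    (hA : Equiv.swap (⟨3*k, by omega⟩ : Fin n) ⟨3*k+1, by omega⟩ ∈ H) :
    Equiv.swap (⟨3*k+2, by omega⟩ : Fin n) ⟨3*k+3, hk⟩ ∈ H := by
  have hC := swapC_mem hx1 (by omega) hA
  have hD := conj_swap_mem hx2 hC
  rw [x2_apply_eq (a := 3*k+2) (b := 3*k+3) (by omega) hk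
      (by unfold F2; split_ifs <;> first | omega | (exfalso; assumption)),
    x2_apply_eq (a := 3*k) (b := 3*k+1) (by omega) (by omega)
      (by unfold F2; split_ifs <;> first | omega | (exfalso; assumption))] at hD
  -- hD : swap (3k+3) (3k+1) ∈ H
  have hB := swapB_mem hx1 (by omega) hA
  rw [Equiv.swap_comm] at hB
  -- hB : swap (3k+2) (3k+1) ∈ H
  rw [Equiv.swap_comm] at hD
  -- hD : swap (3k+1) (3k+3) ∈ H
  exact SubmonoidClass.swap_mem_trans H hB hD

/-- `swap (3k) (3k+1) ∈ H` for all blocks. -/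
lemma swapA_mem (hx1 : x1 n h3 h9 ∈ H) (hx2 : x2 n h3 h9 ∈ H) : ∀ k : ℕ, ∀ hk : 3*k+1 < n,
    Equiv.swap (⟨3*k, by omega⟩ : Fin n) ⟨3*k+1, hk⟩ ∈ H := by
  intro k
  induction k with
  | zero =>
    intro hk
    have h := H.pow_mem hx2 3
    rw [x2_cube (by omega) (by omega)] at h
    exact h
  | succ k ih =>
    intro hk
    have hA := ih (by omega)
    have hE := swapE_mem hx1 hx2 (by omega) hA
    have h := conj_swap_mem hx2 hE
    rw [x2_apply_eq (a := 3*k+2) (b := 3*k+3) (by omega) (by omega)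
        (by unfold F2; split_ifs <;> first | omega | (exfalso; assumption)),
      x2_apply_eq (a := 3*k+3) (b := 3*k+4) (by omega) (by omega)
        (by unfold F2; split_ifs <;> first | omega | (exfalso; assumption))] at h
    -- h : swap (3k+3) (3k+4) ∈ H
    have e1 : (⟨3*k+3, by omega⟩ : Fin n) = ⟨3*(k+1), by omega⟩ :=
      Fin.ext (by show 3*k+3 = 3*(k+1); omega)
    have e2 : (⟨3*k+4, by omega⟩ : Fin n) = ⟨3*(k+1)+1, hk⟩ :=
      Fin.ext (by show 3*k+4 = 3*(k+1)+1; omega)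
    rwa [e1, e2] at h

/-- all adjacent swaps lie in `H`. -/
lemma adj_mem (hx1 : x1 n h3 h9 ∈ H) (hx2 : x2 n h3 h9 ∈ H) (j : ℕ) (hj : j + 1 < n) :
    Equiv.swap (⟨j, by omega⟩ : Fin n) ⟨j+1, hj⟩ ∈ H := by
  obtain ⟨k, hk⟩ : ∃ k, j = 3*k ∨ j = 3*k+1 ∨ j = 3*k+2 := ⟨j/3, by omega⟩
  rcases hk with h | h | h
  · have hh := swapA_mem hx1 hx2 k (by omega)
    have e1 : (⟨3*k, by omega⟩ : Fin n) = ⟨j, by omega⟩ := Fin.ext (by show 3*k = j; omega)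
    have e2 : (⟨3*k+1, by omega⟩ : Fin n) = ⟨j+1, hj⟩ := Fin.ext (by show 3*k+1 = j+1; omega)
    rwa [e1, e2] at hh
  · have hh := swapB_mem hx1 (k := k) (by omega) (swapA_mem hx1 hx2 k (by omega))
    have e1 : (⟨3*k+1, by omega⟩ : Fin n) = ⟨j, by omega⟩ := Fin.ext (by show 3*k+1 = j; omega)
    have e2 : (⟨3*k+2, by omega⟩ : Fin n) = ⟨j+1, hj⟩ := Fin.ext (by show 3*k+2 = j+1; omega)
    rwa [e1, e2] at hh
  · have hh := swapE_mem hx1 hx2 (k := k) (by omega) (swapA_mem hx1 hx2 k (by omega))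
    have e1 : (⟨3*k+2, by omega⟩ : Fin n) = ⟨j, by omega⟩ := Fin.ext (by show 3*k+2 = j; omega)
    have e2 : (⟨3*k+3, by omega⟩ : Fin n) = ⟨j+1, hj⟩ := Fin.ext (by show 3*k+3 = j+1; omega)
    rwa [e1, e2] at hh

lemma swap0_mem (hx1 : x1 n h3 h9 ∈ H) (hx2 : x2 n h3 h9 ∈ H) : ∀ j : ℕ, ∀ hj : j < n, 0 < j →
    Equiv.swap (⟨0, by omega⟩ : Fin n) ⟨j, hj⟩ ∈ H := by
  intro j
  induction j with
  | zero => omega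
  | succ j ih =>
    intro hj h0
    rcases Nat.eq_zero_or_pos j with h | h
    · subst h
      exact adj_mem hx1 hx2 0 hj
    · exact SubmonoidClass.swap_mem_trans H (ih (by omega) h) (adj_mem hx1 hx2 j hj)

lemma swap_all (hx1 : x1 n h3 h9 ∈ H) (hx2 : x2 n h3 h9 ∈ H) (a b : Fin n) (hab : a ≠ b) : Equiv.swap a b ∈ H := by
  obtain ⟨a, ha⟩ := a
  obtain ⟨b, hb⟩ := b
  have hne : a ≠ b := fun h => hab (Fin.ext h)
  by_cases ha0 : a = 0
  · subst ha0
    exact swap0_mem hx1 hx2 b hb (by omega)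
  by_cases hb0 : b = 0
  · subst hb0
    rw [Equiv.swap_comm]
    exact swap0_mem hx1 hx2 a ha (by omega)
  · have h1 := swap0_mem hx1 hx2 a ha (by omega)
    have h2 := swap0_mem hx1 hx2 b hb (by omega)
    rw [Equiv.swap_comm] at h1
    exact SubmonoidClass.swap_mem_trans H h1 h2

lemma all_mem (hx1 : x1 n h3 h9 ∈ H) (hx2 : x2 n h3 h9 ∈ H) (f : Equiv.Perm (Fin n)) : f ∈ H := by
  have hle : Subgroup.closure {σ : Equiv.Perm (Fin n) | σ.IsSwap} ≤ H := by
    rw [Subgroup.closure_le]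
    rintro σ ⟨a, b, hab, rfl⟩
    exact swap_all hx1 hx2 a b hab
  apply hle
  rw [mem_closure_isSwap']
  exact Set.toFinite _

end gen
end Statement16Aux

/-- **Lemma 9.2, case F2.1**: for every `ℓ ≥ 9` divisible by `3` there is a product-one
triple `x₁·x₂·x₃ = 1` in `Sym(ℓ)` generating a subgroup containing `Alt(ℓ)`, where
`x₁` has cycle type `[3^{ℓ/3}]` (no fixed points) and `x₂, x₃` both have cycle type
`[1,2,3^{(ℓ−3)/3}]` (one `2`-cycle, `(ℓ−3)/3` disjoint `3`-cycles, one fixed point). -/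
theorem statement16 (ℓ : ℕ) (hℓ : 9 ≤ ℓ) (h3 : 3 ∣ ℓ) :
    ∃ x₁ x₂ x₃ : Equiv.Perm (Fin ℓ),
      x₁ * x₂ * x₃ = 1 ∧
      alternatingGroup (Fin ℓ) ≤ Subgroup.closure {x₁, x₂, x₃} ∧
      x₁.cycleType = Multiset.replicate (ℓ / 3) 3 ∧
      x₂.cycleType = 2 ::ₘ Multiset.replicate ((ℓ - 3) / 3) 3 ∧
      x₃.cycleType = 2 ::ₘ Multiset.replicate ((ℓ - 3) / 3) 3 := by
  refine ⟨Statement16Aux.x1 ℓ h3 hℓ, Statement16Aux.x2 ℓ h3 hℓ, Statement16Aux.x3 ℓ h3 hℓ,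
    Statement16Aux.prod_eq_one, ?_, Statement16Aux.x1_cycleType,
    Statement16Aux.x2_cycleType, Statement16Aux.x3_cycleType⟩
  intro f _
  exact Statement16Aux.all_mem (n := ℓ) (h3 := h3) (h9 := hℓ)
    (Subgroup.subset_closure (by simp))
    (Subgroup.subset_closure (by simp)) f
end

section
/- For every integer ℓ ≥ 9 with ℓ ≡ 2 (mod 3) there exist x₁, x₂, x₃ ∈ Sym(ℓ) such that x₁·x₂·x₃ = 1, the subgroup generated by x₁, x₂, x₃ contains Alt(ℓ), x₁ is a product of (ℓ−2)/3 pairwise disjoint 3-cycles with exactly two fixed points (cycle type [1²,3^{(ℓ−2)/3}]), and each of x₂ and x₃ is a product of one 2-cycle and (ℓ−2)/3 pairwise disjoint 3-cycles, with no fixed points (cycle type [2,3^{(ℓ−2)/3}]). -/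
open Equiv Equiv.Perm List

set_option linter.unusedSectionVars false

namespace S17

/-- the point `v` (mod `3m+2`) of `Fin (3*m+2)`. -/
def pt (m v : ℕ) : Fin (3*m+2) := ⟨v % (3*m+2), Nat.mod_lt _ (by omega)⟩

lemma pt_val (m : ℕ) {v : ℕ} (h : v < 3*m+2) : (pt m v).1 = v := Nat.mod_eq_of_lt h

lemma pt_ne (m : ℕ) {u v : ℕ} (hu : u < 3*m+2) (hv : v < 3*m+2) (h : u ≠ v) :
    pt m u ≠ pt m v := by
  intro hc
  exact h ((pt_val m hu).symm.trans (congrArg Fin.val hc) |>.trans (pt_val m hv))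

lemma pt_eq (m u v : ℕ) (h : u = v) : pt m u = pt m v := congrArg _ h

/-- the 3-cycle `a ↦ b ↦ c ↦ a`. -/
def cyc {α : Type*} [DecidableEq α] (a b c : α) : Perm α := Equiv.swap a b * Equiv.swap b c

variable {α : Type*} [DecidableEq α]

lemma cyc_fix {a b c x : α} (h1 : x ≠ a) (h2 : x ≠ b) (h3 : x ≠ c) : cyc a b c x = x := by
  simp [cyc, Perm.mul_apply, Equiv.swap_apply_of_ne_of_ne, h1, h2, h3]

lemma cyc_a {a b c : α} (hab : a ≠ b) (hac : a ≠ c) : cyc a b c a = b := by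
  simp [cyc, Perm.mul_apply, Equiv.swap_apply_of_ne_of_ne hab hac]

lemma cyc_b {a b c : α} (hac : a ≠ c) (hbc : b ≠ c) : cyc a b c b = c := by
  simp [cyc, Perm.mul_apply, Equiv.swap_apply_of_ne_of_ne hac.symm hbc.symm]

lemma cyc_c {a b c : α} : cyc a b c c = a := by
  simp [cyc, Perm.mul_apply]

lemma cyc_isThreeCycle {a b c : α} [Fintype α] (hab : a ≠ b) (hac : a ≠ c) (hbc : b ≠ c) :
    IsThreeCycle (cyc a b c) := by
  rw [cyc, Equiv.swap_comm a b]
  exact isThreeCycle_swap_mul_swap_same hab.symm hbc hac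

lemma cyc_cube {a b c : α} [Fintype α] (hab : a ≠ b) (hac : a ≠ c) (hbc : b ≠ c) :
    (cyc a b c) ^ 3 = 1 := by
  have h := (cyc_isThreeCycle hab hac hbc).orderOf
  rw [← h]
  exact pow_orderOf_eq_one _

lemma cyc_support {a b c : α} [Fintype α] (hab : a ≠ b) (hac : a ≠ c) (hbc : b ≠ c) :
    (cyc a b c).support = {a, b, c} :=
  support_swap_mul_swap (by simp [hab, hac, hbc])

lemma cyc_support_card {a b c : α} [Fintype α] (hab : a ≠ b) (hac : a ≠ c) (hbc : b ≠ c) :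
    (cyc a b c).support.card = 3 := (cyc_isThreeCycle hab hac hbc).card_support

lemma disj_cyc_cyc {a b c d e f : α} (had : a ≠ d) (hae : a ≠ e) (haf : a ≠ f)
    (hbd : b ≠ d) (hbe : b ≠ e) (hbf : b ≠ f) (hcd : c ≠ d) (hce : c ≠ e) (hcf : c ≠ f) :
    Perm.Disjoint (cyc a b c) (cyc d e f) := by
  intro x
  by_cases h : x = a ∨ x = b ∨ x = c
  · right
    obtain rfl | rfl | rfl := h
    · exact cyc_fix had hae haf
    · exact cyc_fix hbd hbe hbf
    · exact cyc_fix hcd hce hcf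
  · push_neg at h
    exact Or.inl (cyc_fix h.1 h.2.1 h.2.2)

lemma disj_swap_cyc {a b d e f : α} (had : a ≠ d) (hae : a ≠ e) (haf : a ≠ f)
    (hbd : b ≠ d) (hbe : b ≠ e) (hbf : b ≠ f) :
    Perm.Disjoint (Equiv.swap a b) (cyc d e f) := by
  intro x
  by_cases h : x = a ∨ x = b
  · right
    obtain rfl | rfl := h
    · exact cyc_fix had hae haf
    · exact cyc_fix hbd hbe hbf
  · push_neg at h
    exact Or.inl (Equiv.swap_apply_of_ne_of_ne h.1 h.2)

lemma prod_fix (l : List (Perm α)) (x : α) (h : ∀ g ∈ l, g x = x) : l.prod x = x := by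
  induction l with
  | nil => rfl
  | cons a t ih =>
      rw [List.prod_cons, Perm.mul_apply, ih (fun g hg => h g (List.mem_cons_of_mem _ hg)),
        h a (List.mem_cons_self)]

lemma prod_range_apply (f : ℕ → Perm α) (M j : ℕ) (x : α) (hj : j < M)
    (h1 : ∀ k, k < M → k ≠ j → f k x = x)
    (h2 : ∀ k, k < M → k ≠ j → f k (f j x) = f j x) :
    ((List.range M).map f).prod x = f j x := by
  induction M with
  | zero => omega
  | succ M ih =>
      rw [List.range_succ, List.map_append, List.prod_append]
      simp only [List.map_cons, List.map_nil, List.prod_cons, List.prod_nil, mul_one,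
        Perm.mul_apply]
      rcases eq_or_ne j M with rfl | hne
      · exact prod_fix _ _ (by
          intro g hg
          obtain ⟨k, hk, rfl⟩ := List.mem_map.mp hg
          exact h2 k (by simp at hk; omega) (by simp at hk; omega))
      · rw [h1 M (by omega) (Ne.symm hne)]
        exact ih (by omega) (fun k hk hkj => h1 k (by omega) hkj)
          (fun k hk hkj => h2 k (by omega) hkj)

end S17

namespace S17

def l1 (m : ℕ) : List (Perm (Fin (3*m+2))) :=
  (List.range m).map fun k => cyc (pt m (3*k+2)) (pt m (3*k+3)) (pt m (3*k+4))

def x1 (m : ℕ) : Perm (Fin (3*m+2)) := (l1 m).prod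

def l2 (m : ℕ) : List (Perm (Fin (3*m+2))) :=
  Equiv.swap (pt m 0) (pt m (3*m+1)) ::
    (List.range m).map fun k => cyc (pt m (3*k+1)) (pt m (3*k+2)) (pt m (3*k+3))

def x2 (m : ℕ) : Perm (Fin (3*m+2)) := (l2 m).prod

def l3 (m : ℕ) : List (Perm (Fin (3*m+2))) :=
  Equiv.swap (pt m 1) (pt m 3) :: cyc (pt m 0) (pt m (3*m+1)) (pt m (3*m-1)) ::
    (List.range (m-1)).map fun k => cyc (pt m (3*k+2)) (pt m (3*k+6)) (pt m (3*k+4))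

def x3 (m : ℕ) : Perm (Fin (3*m+2)) := (l3 m).prod

section eval

variable {m : ℕ}

/-- generic evaluation of a product of translated 3-cycles. -/
lemma cyc_prod (a b c : ℕ → ℕ) (M : ℕ)
    (hb : ∀ k, k < M → a k < 3*m+2 ∧ b k < 3*m+2 ∧ c k < 3*m+2)
    (hd : ∀ k, k < M → a k ≠ b k ∧ a k ≠ c k ∧ b k ≠ c k)
    (hsep : ∀ j k, j < M → k < M → j ≠ k →
      a j ≠ a k ∧ a j ≠ b k ∧ a j ≠ c k ∧ b j ≠ a k ∧ b j ≠ b k ∧ b j ≠ c k ∧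
      c j ≠ a k ∧ c j ≠ b k ∧ c j ≠ c k)
    (k : ℕ) (hk : k < M) :
    ((List.range M).map fun k => cyc (pt m (a k)) (pt m (b k)) (pt m (c k))).prod (pt m (a k))
        = pt m (b k) ∧
    ((List.range M).map fun k => cyc (pt m (a k)) (pt m (b k)) (pt m (c k))).prod (pt m (b k))
        = pt m (c k) ∧
    ((List.range M).map fun k => cyc (pt m (a k)) (pt m (b k)) (pt m (c k))).prod (pt m (c k))
        = pt m (a k) := by
  have hbk := hb k hk
  have hdk := hd k hk
  have pne : ∀ {u v : ℕ}, u < 3*m+2 → v < 3*m+2 → u ≠ v → pt m u ≠ pt m v := fun hu hv h =>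
    pt_ne m hu hv h
  have fixo : ∀ (u : ℕ), u < 3*m+2 → (∀ j, j < M → j ≠ k → u ≠ a j ∧ u ≠ b j ∧ u ≠ c j) →
      ∀ j, j < M → j ≠ k → cyc (pt m (a j)) (pt m (b j)) (pt m (c j)) (pt m u) = pt m u :=
    fun u hu h j hj hjk => cyc_fix (pne hu (hb j hj).1 (h j hj hjk).1)
      (pne hu (hb j hj).2.1 (h j hj hjk).2.1) (pne hu (hb j hj).2.2 (h j hj hjk).2.2)
  have fa : ∀ j, j < M → j ≠ k →
      cyc (pt m (a j)) (pt m (b j)) (pt m (c j)) (pt m (a k)) = pt m (a k) :=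
    fixo (a k) hbk.1 (fun j hj hjk =>
      ⟨((hsep k j hk hj (Ne.symm hjk)).1), ((hsep k j hk hj (Ne.symm hjk)).2.1),
        ((hsep k j hk hj (Ne.symm hjk)).2.2.1)⟩)
  have fb : ∀ j, j < M → j ≠ k →
      cyc (pt m (a j)) (pt m (b j)) (pt m (c j)) (pt m (b k)) = pt m (b k) :=
    fixo (b k) hbk.2.1 (fun j hj hjk =>
      ⟨((hsep k j hk hj (Ne.symm hjk)).2.2.2.1), ((hsep k j hk hj (Ne.symm hjk)).2.2.2.2.1),
        ((hsep k j hk hj (Ne.symm hjk)).2.2.2.2.2.1)⟩)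
  have fc : ∀ j, j < M → j ≠ k →
      cyc (pt m (a j)) (pt m (b j)) (pt m (c j)) (pt m (c k)) = pt m (c k) :=
    fixo (c k) hbk.2.2 (fun j hj hjk =>
      ⟨((hsep k j hk hj (Ne.symm hjk)).2.2.2.2.2.2.1),
        ((hsep k j hk hj (Ne.symm hjk)).2.2.2.2.2.2.2.1),
        ((hsep k j hk hj (Ne.symm hjk)).2.2.2.2.2.2.2.2)⟩)
  have ea : cyc (pt m (a k)) (pt m (b k)) (pt m (c k)) (pt m (a k)) = pt m (b k) :=
    cyc_a (pne hbk.1 hbk.2.1 hdk.1) (pne hbk.1 hbk.2.2 hdk.2.1)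
  have eb : cyc (pt m (a k)) (pt m (b k)) (pt m (c k)) (pt m (b k)) = pt m (c k) :=
    cyc_b (pne hbk.1 hbk.2.2 hdk.2.1) (pne hbk.2.1 hbk.2.2 hdk.2.2)
  have ec : cyc (pt m (a k)) (pt m (b k)) (pt m (c k)) (pt m (c k)) = pt m (a k) := cyc_c
  refine ⟨?_, ?_, ?_⟩
  · rw [prod_range_apply _ M k _ hk fa (fun j hj hjk => by rw [ea]; exact fb j hj hjk), ea]
  · rw [prod_range_apply _ M k _ hk fb (fun j hj hjk => by rw [eb]; exact fc j hj hjk), eb]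
  · rw [prod_range_apply _ M k _ hk fc (fun j hj hjk => by rw [ec]; exact fa j hj hjk), ec]

lemma cyc_prod_fix (a b c : ℕ → ℕ) (M : ℕ) {v : ℕ} (hv : v < 3*m+2)
    (hb : ∀ k, k < M → a k < 3*m+2 ∧ b k < 3*m+2 ∧ c k < 3*m+2)
    (h : ∀ k, k < M → v ≠ a k ∧ v ≠ b k ∧ v ≠ c k) :
    ((List.range M).map fun k => cyc (pt m (a k)) (pt m (b k)) (pt m (c k))).prod (pt m v)
      = pt m v := by
  refine prod_fix _ _ ?_
  intro g hg
  obtain ⟨k, hk, rfl⟩ := List.mem_map.mp hg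
  rw [List.mem_range] at hk
  exact cyc_fix (pt_ne m hv (hb k hk).1 (h k hk).1) (pt_ne m hv (hb k hk).2.1 (h k hk).2.1)
    (pt_ne m hv (hb k hk).2.2 (h k hk).2.2)

/- ### evaluation of x1 -/

lemma x1_eval {k : ℕ} (hk : k < m) :
    x1 m (pt m (3*k+2)) = pt m (3*k+3) ∧ x1 m (pt m (3*k+3)) = pt m (3*k+4) ∧
      x1 m (pt m (3*k+4)) = pt m (3*k+2) := by
  have h := cyc_prod (m := m) (fun k => 3*k+2) (fun k => 3*k+3) (fun k => 3*k+4) m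
    (fun k hk => by omega) (fun k hk => by omega)
    (fun j k hj hk hjk => by omega) k hk
  exact h

lemma x1_fix {v : ℕ} (hv : v < 3*m+2) (h : ∀ k, k < m → v ≠ 3*k+2 ∧ v ≠ 3*k+3 ∧ v ≠ 3*k+4) :
    x1 m (pt m v) = pt m v := by
  have h := cyc_prod_fix (m := m) (fun k => 3*k+2) (fun k => 3*k+3) (fun k => 3*k+4) m hv
    (fun k hk => by omega) h
  exact h

/- ### evaluation of x2 -/

lemma x2_cycprod {k : ℕ} (hk : k < m) :
    ((List.range m).map fun k => cyc (pt m (3*k+1)) (pt m (3*k+2)) (pt m (3*k+3))).prod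
        (pt m (3*k+1)) = pt m (3*k+2) ∧
    ((List.range m).map fun k => cyc (pt m (3*k+1)) (pt m (3*k+2)) (pt m (3*k+3))).prod
        (pt m (3*k+2)) = pt m (3*k+3) ∧
    ((List.range m).map fun k => cyc (pt m (3*k+1)) (pt m (3*k+2)) (pt m (3*k+3))).prod
        (pt m (3*k+3)) = pt m (3*k+1) := by
  have h := cyc_prod (m := m) (fun k => 3*k+1) (fun k => 3*k+2) (fun k => 3*k+3) m
    (fun k hk => by omega) (fun k hk => by omega)
    (fun j k hj hk hjk => by omega) k hk
  exact h

lemma x2_cycprod_fix {v : ℕ} (hv : v < 3*m+2)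
    (h : ∀ k, k < m → v ≠ 3*k+1 ∧ v ≠ 3*k+2 ∧ v ≠ 3*k+3) :
    ((List.range m).map fun k => cyc (pt m (3*k+1)) (pt m (3*k+2)) (pt m (3*k+3))).prod
      (pt m v) = pt m v := by
  have h := cyc_prod_fix (m := m) (fun k => 3*k+1) (fun k => 3*k+2) (fun k => 3*k+3) m hv
    (fun k hk => by omega) h
  exact h

lemma x2_0 : x2 m (pt m 0) = pt m (3*m+1) := by
  rw [x2, l2, List.prod_cons, Perm.mul_apply,
    x2_cycprod_fix (by omega) (fun k hk => by omega), Equiv.swap_apply_left]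

lemma x2_top : x2 m (pt m (3*m+1)) = pt m 0 := by
  rw [x2, l2, List.prod_cons, Perm.mul_apply,
    x2_cycprod_fix (by omega) (fun k hk => by omega), Equiv.swap_apply_right]

lemma x2_a {k : ℕ} (hk : k < m) : x2 m (pt m (3*k+1)) = pt m (3*k+2) := by
  rw [x2, l2, List.prod_cons, Perm.mul_apply, (x2_cycprod hk).1,
    Equiv.swap_apply_of_ne_of_ne (pt_ne m (by omega) (by omega) (by omega))
      (pt_ne m (by omega) (by omega) (by omega))]

lemma x2_b {k : ℕ} (hk : k < m) : x2 m (pt m (3*k+2)) = pt m (3*k+3) := by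
  rw [x2, l2, List.prod_cons, Perm.mul_apply, (x2_cycprod hk).2.1,
    Equiv.swap_apply_of_ne_of_ne (pt_ne m (by omega) (by omega) (by omega))
      (pt_ne m (by omega) (by omega) (by omega))]

lemma x2_c {k : ℕ} (hk : k < m) : x2 m (pt m (3*k+3)) = pt m (3*k+1) := by
  rw [x2, l2, List.prod_cons, Perm.mul_apply, (x2_cycprod hk).2.2,
    Equiv.swap_apply_of_ne_of_ne (pt_ne m (by omega) (by omega) (by omega))
      (pt_ne m (by omega) (by omega) (by omega))]

/- ### evaluation of x3 -/

lemma x3_cycprod {k : ℕ} (hk : k < m-1) :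
    ((List.range (m-1)).map fun k => cyc (pt m (3*k+2)) (pt m (3*k+6)) (pt m (3*k+4))).prod
        (pt m (3*k+2)) = pt m (3*k+6) ∧
    ((List.range (m-1)).map fun k => cyc (pt m (3*k+2)) (pt m (3*k+6)) (pt m (3*k+4))).prod
        (pt m (3*k+6)) = pt m (3*k+4) ∧
    ((List.range (m-1)).map fun k => cyc (pt m (3*k+2)) (pt m (3*k+6)) (pt m (3*k+4))).prod
        (pt m (3*k+4)) = pt m (3*k+2) := by
  have h := cyc_prod (m := m) (fun k => 3*k+2) (fun k => 3*k+6) (fun k => 3*k+4) (m-1)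
    (fun k hk => by omega) (fun k hk => by omega)
    (fun j k hj hk hjk => by omega) k hk
  exact h

lemma x3_cycprod_fix {v : ℕ} (hv : v < 3*m+2)
    (h : ∀ k, k < m-1 → v ≠ 3*k+2 ∧ v ≠ 3*k+6 ∧ v ≠ 3*k+4) :
    ((List.range (m-1)).map fun k => cyc (pt m (3*k+2)) (pt m (3*k+6)) (pt m (3*k+4))).prod
      (pt m v) = pt m v := by
  have h := cyc_prod_fix (m := m) (fun k => 3*k+2) (fun k => 3*k+6) (fun k => 3*k+4) (m-1) hv
    (fun k hk => by omega) h
  exact h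

variable (hm : 3 ≤ m)
include hm

lemma x3_0 : x3 m (pt m 0) = pt m (3*m+1) := by
  rw [x3, l3, List.prod_cons, List.prod_cons, Perm.mul_apply, Perm.mul_apply,
    x3_cycprod_fix (by omega) (fun k hk => by omega),
    cyc_a (pt_ne m (by omega) (by omega) (by omega)) (pt_ne m (by omega) (by omega) (by omega)),
    Equiv.swap_apply_of_ne_of_ne (pt_ne m (by omega) (by omega) (by omega))
      (pt_ne m (by omega) (by omega) (by omega))]

lemma x3_top : x3 m (pt m (3*m+1)) = pt m (3*m-1) := by
  rw [x3, l3, List.prod_cons, List.prod_cons, Perm.mul_apply, Perm.mul_apply,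
    x3_cycprod_fix (by omega) (fun k hk => by omega),
    cyc_b (pt_ne m (by omega) (by omega) (by omega)) (pt_ne m (by omega) (by omega) (by omega)),
    Equiv.swap_apply_of_ne_of_ne (pt_ne m (by omega) (by omega) (by omega))
      (pt_ne m (by omega) (by omega) (by omega))]

lemma x3_low : x3 m (pt m (3*m-1)) = pt m 0 := by
  rw [x3, l3, List.prod_cons, List.prod_cons, Perm.mul_apply, Perm.mul_apply,
    x3_cycprod_fix (by omega) (fun k hk => by omega), cyc_c,
    Equiv.swap_apply_of_ne_of_ne (pt_ne m (by omega) (by omega) (by omega))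
      (pt_ne m (by omega) (by omega) (by omega))]

lemma x3_1 : x3 m (pt m 1) = pt m 3 := by
  rw [x3, l3, List.prod_cons, List.prod_cons, Perm.mul_apply, Perm.mul_apply,
    x3_cycprod_fix (by omega) (fun k hk => by omega),
    cyc_fix (pt_ne m (by omega) (by omega) (by omega)) (pt_ne m (by omega) (by omega) (by omega))
      (pt_ne m (by omega) (by omega) (by omega)), Equiv.swap_apply_left]

lemma x3_3 : x3 m (pt m 3) = pt m 1 := by
  rw [x3, l3, List.prod_cons, List.prod_cons, Perm.mul_apply, Perm.mul_apply,
    x3_cycprod_fix (by omega) (fun k hk => by omega),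
    cyc_fix (pt_ne m (by omega) (by omega) (by omega)) (pt_ne m (by omega) (by omega) (by omega))
      (pt_ne m (by omega) (by omega) (by omega)), Equiv.swap_apply_right]

lemma x3_a {k : ℕ} (hk : k < m-1) : x3 m (pt m (3*k+2)) = pt m (3*k+6) := by
  rw [x3, l3, List.prod_cons, List.prod_cons, Perm.mul_apply, Perm.mul_apply,
    (x3_cycprod hk).1,
    cyc_fix (pt_ne m (by omega) (by omega) (by omega)) (pt_ne m (by omega) (by omega) (by omega))
      (pt_ne m (by omega) (by omega) (by omega)),
    Equiv.swap_apply_of_ne_of_ne (pt_ne m (by omega) (by omega) (by omega))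
      (pt_ne m (by omega) (by omega) (by omega))]

lemma x3_b {k : ℕ} (hk : k < m-1) : x3 m (pt m (3*k+6)) = pt m (3*k+4) := by
  rw [x3, l3, List.prod_cons, List.prod_cons, Perm.mul_apply, Perm.mul_apply,
    (x3_cycprod hk).2.1,
    cyc_fix (pt_ne m (by omega) (by omega) (by omega)) (pt_ne m (by omega) (by omega) (by omega))
      (pt_ne m (by omega) (by omega) (by omega)),
    Equiv.swap_apply_of_ne_of_ne (pt_ne m (by omega) (by omega) (by omega))
      (pt_ne m (by omega) (by omega) (by omega))]

lemma x3_c {k : ℕ} (hk : k < m-1) : x3 m (pt m (3*k+4)) = pt m (3*k+2) := by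
  rw [x3, l3, List.prod_cons, List.prod_cons, Perm.mul_apply, Perm.mul_apply,
    (x3_cycprod hk).2.2,
    cyc_fix (pt_ne m (by omega) (by omega) (by omega)) (pt_ne m (by omega) (by omega) (by omega))
      (pt_ne m (by omega) (by omega) (by omega)),
    Equiv.swap_apply_of_ne_of_ne (pt_ne m (by omega) (by omega) (by omega))
      (pt_ne m (by omega) (by omega) (by omega))]

/- ### the product-one relation -/

omit hm in
lemma pt_of_fin (x : Fin (3*m+2)) : x = pt m x.1 := by
  apply Fin.ext
  rw [pt_val m x.2]

lemma prod_one : x1 m * x2 m * x3 m = 1 := by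
  ext x
  rw [Perm.mul_apply, Perm.mul_apply, Perm.one_apply]
  obtain ⟨v, hv⟩ : ∃ v, x = pt m v ∧ v < 3*m+2 := ⟨x.1, pt_of_fin x, x.2⟩
  obtain ⟨rfl, hv⟩ := hv
  obtain h|h|h|h|h|h|h|h : v = 0 ∨ v = 1 ∨ v = 3 ∨ v = 3*m+1 ∨ v = 3*m-1 ∨
      (v/3 < m-1 ∧ v = 3*(v/3)+2) ∨ (2 ≤ v/3 ∧ v/3 ≤ m ∧ v = 3*(v/3)) ∨
      (1 ≤ v/3 ∧ v/3 ≤ m-1 ∧ v = 3*(v/3)+1) := by omega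
  · rw [h, x3_0 hm, x2_top, x1_fix (by omega) (fun k hk => by omega)]
  · rw [h, x3_1 hm, show pt m 3 = pt m (3*0+3) from pt_eq m _ _ (by norm_num),
      x2_c (m := m) (k := 0) (by omega), x1_fix (by omega) (fun k hk => by omega)]
  · rw [h, x3_3 hm, show pt m 1 = pt m (3*0+1) from pt_eq m _ _ (by norm_num),
      x2_a (m := m) (k := 0) (by omega), (x1_eval (m := m) (k := 0) (by omega)).1]
  · rw [h, x3_top hm, show pt m (3*m-1) = pt m (3*(m-1)+2) from pt_eq m _ _ (by omega),
      x2_b (m := m) (k := m-1) (by omega), (x1_eval (m := m) (k := m-1) (by omega)).2.1]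
    rw [pt_val m (by omega), pt_val m (by omega)]; omega
  · rw [h, x3_low hm, x2_0, show pt m (3*m+1) = pt m (3*(m-1)+4) from pt_eq m _ _ (by omega),
      (x1_eval (m := m) (k := m-1) (by omega)).2.2]
    rw [pt_val m (by omega), pt_val m (by omega)]; omega
  · obtain ⟨hk, hveq⟩ := h
    rw [hveq, x3_a hm hk, show pt m (3*(v/3)+6) = pt m (3*(v/3+1)+3) from pt_eq m _ _ (by omega),
      x2_c (m := m) (k := v/3+1) (by omega),
      show pt m (3*(v/3+1)+1) = pt m (3*(v/3)+4) from pt_eq m _ _ (by omega),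
      (x1_eval (m := m) (k := v/3) (by omega)).2.2]
  · obtain ⟨h2, hle, hveq⟩ := h
    rw [hveq, show pt m (3*(v/3)) = pt m (3*(v/3-2)+6) from pt_eq m _ _ (by omega),
      x3_b hm (by omega),
      show pt m (3*(v/3-2)+4) = pt m (3*(v/3-1)+1) from pt_eq m _ _ (by omega),
      x2_a (m := m) (k := v/3-1) (by omega), (x1_eval (m := m) (k := v/3-1) (by omega)).1]
    rw [pt_val m (by omega), pt_val m (by omega)]; omega
  · obtain ⟨h1, hle, hveq⟩ := h
    rw [hveq, show pt m (3*(v/3)+1) = pt m (3*(v/3-1)+4) from pt_eq m _ _ (by omega),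
      x3_c hm (by omega), x2_b (m := m) (k := v/3-1) (by omega), (x1_eval (m := m) (k := v/3-1) (by omega)).2.1]

/- ### disjointness, cubes, cycle types -/

omit hm in
lemma pd_map (a b c : ℕ → ℕ) (M : ℕ)
    (hb : ∀ k, k < M → a k < 3*m+2 ∧ b k < 3*m+2 ∧ c k < 3*m+2)
    (hsep : ∀ j k, j < M → k < M → j ≠ k →
      a j ≠ a k ∧ a j ≠ b k ∧ a j ≠ c k ∧ b j ≠ a k ∧ b j ≠ b k ∧ b j ≠ c k ∧
      c j ≠ a k ∧ c j ≠ b k ∧ c j ≠ c k) :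
    ((List.range M).map fun k => cyc (pt m (a k)) (pt m (b k)) (pt m (c k))).Pairwise
      Perm.Disjoint := by
  rw [List.pairwise_map]
  refine List.Pairwise.imp_of_mem ?_ List.pairwise_lt_range
  intro j k hj hk hjk
  rw [List.mem_range] at hj hk
  have hs := hsep j k hj hk (by omega)
  exact disj_cyc_cyc
    (pt_ne m (hb j hj).1 (hb k hk).1 hs.1) (pt_ne m (hb j hj).1 (hb k hk).2.1 hs.2.1)
    (pt_ne m (hb j hj).1 (hb k hk).2.2 hs.2.2.1)
    (pt_ne m (hb j hj).2.1 (hb k hk).1 hs.2.2.2.1)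
    (pt_ne m (hb j hj).2.1 (hb k hk).2.1 hs.2.2.2.2.1)
    (pt_ne m (hb j hj).2.1 (hb k hk).2.2 hs.2.2.2.2.2.1)
    (pt_ne m (hb j hj).2.2 (hb k hk).1 hs.2.2.2.2.2.2.1)
    (pt_ne m (hb j hj).2.2 (hb k hk).2.1 hs.2.2.2.2.2.2.2.1)
    (pt_ne m (hb j hj).2.2 (hb k hk).2.2 hs.2.2.2.2.2.2.2.2)

omit hm in
lemma pd1 : (l1 m).Pairwise Perm.Disjoint :=
  pd_map _ _ _ m (fun k hk => by omega) (fun j k hj hk hjk => by omega)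

omit hm in
lemma pd2 : (l2 m).Pairwise Perm.Disjoint := by
  rw [l2, List.pairwise_cons]
  constructor
  · intro g hg
    obtain ⟨k, hk, rfl⟩ := List.mem_map.mp hg
    rw [List.mem_range] at hk
    exact disj_swap_cyc (pt_ne m (by omega) (by omega) (by omega))
      (pt_ne m (by omega) (by omega) (by omega)) (pt_ne m (by omega) (by omega) (by omega))
      (pt_ne m (by omega) (by omega) (by omega)) (pt_ne m (by omega) (by omega) (by omega))
      (pt_ne m (by omega) (by omega) (by omega))
  · exact pd_map _ _ _ m (fun k hk => by omega) (fun j k hj hk hjk => by omega)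

lemma pd3 : (l3 m).Pairwise Perm.Disjoint := by
  rw [l3, List.pairwise_cons]
  refine ⟨?_, ?_⟩
  · intro g hg
    rcases List.mem_cons.mp hg with rfl | hg
    · exact disj_swap_cyc (pt_ne m (by omega) (by omega) (by omega))
        (pt_ne m (by omega) (by omega) (by omega)) (pt_ne m (by omega) (by omega) (by omega))
        (pt_ne m (by omega) (by omega) (by omega)) (pt_ne m (by omega) (by omega) (by omega))
        (pt_ne m (by omega) (by omega) (by omega))
    · obtain ⟨k, hk, rfl⟩ := List.mem_map.mp hg
      rw [List.mem_range] at hk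
      exact disj_swap_cyc (pt_ne m (by omega) (by omega) (by omega))
        (pt_ne m (by omega) (by omega) (by omega)) (pt_ne m (by omega) (by omega) (by omega))
        (pt_ne m (by omega) (by omega) (by omega)) (pt_ne m (by omega) (by omega) (by omega))
        (pt_ne m (by omega) (by omega) (by omega))
  · rw [List.pairwise_cons]
    refine ⟨?_, ?_⟩
    · intro g hg
      obtain ⟨k, hk, rfl⟩ := List.mem_map.mp hg
      rw [List.mem_range] at hk
      exact disj_cyc_cyc (pt_ne m (by omega) (by omega) (by omega))
        (pt_ne m (by omega) (by omega) (by omega)) (pt_ne m (by omega) (by omega) (by omega))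
        (pt_ne m (by omega) (by omega) (by omega)) (pt_ne m (by omega) (by omega) (by omega))
        (pt_ne m (by omega) (by omega) (by omega)) (pt_ne m (by omega) (by omega) (by omega))
        (pt_ne m (by omega) (by omega) (by omega)) (pt_ne m (by omega) (by omega) (by omega))
    · exact pd_map _ _ _ (m-1) (fun k hk => by omega) (fun j k hj hk hjk => by omega)

omit hm in
lemma prod_cube_eq_one (l : List (Perm (Fin (3*m+2)))) (hd : l.Pairwise Perm.Disjoint)
    (h : ∀ g ∈ l, g^3 = 1) : l.prod ^ 3 = 1 := by
  induction l with
  | nil => simp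
  | cons a t ih =>
      obtain ⟨h1, h2⟩ := List.pairwise_cons.mp hd
      rw [List.prod_cons,
        ((Perm.disjoint_prod_right t h1).commute).mul_pow,
        h a (List.mem_cons_self), one_mul,
        ih h2 (fun g hg => h g (List.mem_cons_of_mem _ hg))]

omit hm in
lemma swap_cube {a b : Fin (3*m+2)} : Equiv.swap a b ^ 3 = Equiv.swap a b := by
  rw [pow_succ, sq, Equiv.swap_mul_self, one_mul]

omit hm in
lemma x2_cube : (x2 m)^3 = Equiv.swap (pt m 0) (pt m (3*m+1)) := by
  obtain ⟨h1, h2⟩ := List.pairwise_cons.mp (pd2 (m := m))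
  rw [x2, l2, List.prod_cons, ((Perm.disjoint_prod_right _ h1).commute).mul_pow,
    prod_cube_eq_one _ h2 ?_, mul_one, swap_cube]
  intro g hg
  obtain ⟨k, hk, rfl⟩ := List.mem_map.mp hg
  rw [List.mem_range] at hk
  exact cyc_cube (pt_ne m (by omega) (by omega) (by omega))
    (pt_ne m (by omega) (by omega) (by omega)) (pt_ne m (by omega) (by omega) (by omega))

lemma x3_cube : (x3 m)^3 = Equiv.swap (pt m 1) (pt m 3) := by
  obtain ⟨h1, h2⟩ := List.pairwise_cons.mp (pd3 hm)
  rw [x3, l3, List.prod_cons, ((Perm.disjoint_prod_right _ h1).commute).mul_pow,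
    prod_cube_eq_one _ h2 ?_, mul_one, swap_cube]
  intro g hg
  rcases List.mem_cons.mp hg with rfl | hg
  · exact cyc_cube (pt_ne m (by omega) (by omega) (by omega))
      (pt_ne m (by omega) (by omega) (by omega)) (pt_ne m (by omega) (by omega) (by omega))
  · obtain ⟨k, hk, rfl⟩ := List.mem_map.mp hg
    rw [List.mem_range] at hk
    exact cyc_cube (pt_ne m (by omega) (by omega) (by omega))
      (pt_ne m (by omega) (by omega) (by omega)) (pt_ne m (by omega) (by omega) (by omega))

/- ### cycle types -/

omit hm in
lemma ct1 : (x1 m).cycleType = Multiset.replicate m 3 := by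
  rw [Perm.cycleType_eq (σ := x1 m) (l1 m) rfl ?_ pd1]
  · rw [Multiset.eq_replicate]
    constructor
    · simp [l1]
    · intro b hb
      rw [Multiset.mem_coe, List.mem_map] at hb
      obtain ⟨g, hg, rfl⟩ := hb
      obtain ⟨k, hk, rfl⟩ := List.mem_map.mp hg
      rw [List.mem_range] at hk
      exact cyc_support_card (pt_ne m (by omega) (by omega) (by omega))
        (pt_ne m (by omega) (by omega) (by omega)) (pt_ne m (by omega) (by omega) (by omega))
  · intro g hg
    obtain ⟨k, hk, rfl⟩ := List.mem_map.mp hg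
    rw [List.mem_range] at hk
    exact (cyc_isThreeCycle (pt_ne m (by omega) (by omega) (by omega))
      (pt_ne m (by omega) (by omega) (by omega))
      (pt_ne m (by omega) (by omega) (by omega))).isCycle

omit hm in
lemma ct2 : (x2 m).cycleType = 2 ::ₘ Multiset.replicate m 3 := by
  rw [Perm.cycleType_eq (σ := x2 m) (l2 m) rfl ?_ pd2]
  · rw [l2, List.map_cons, ← Multiset.cons_coe]
    congr 1
    · exact Perm.card_support_swap (pt_ne m (by omega) (by omega) (by omega))
    · rw [Multiset.eq_replicate]
      constructor
      · simp
      · intro b hb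
        rw [Multiset.mem_coe, List.mem_map] at hb
        obtain ⟨g, hg, rfl⟩ := hb
        obtain ⟨k, hk, rfl⟩ := List.mem_map.mp hg
        rw [List.mem_range] at hk
        exact cyc_support_card (pt_ne m (by omega) (by omega) (by omega))
          (pt_ne m (by omega) (by omega) (by omega)) (pt_ne m (by omega) (by omega) (by omega))
  · intro g hg
    rcases List.mem_cons.mp hg with rfl | hg
    · exact Equiv.Perm.isCycle_swap (pt_ne m (by omega) (by omega) (by omega))
    · obtain ⟨k, hk, rfl⟩ := List.mem_map.mp hg
      rw [List.mem_range] at hk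
      exact (cyc_isThreeCycle (pt_ne m (by omega) (by omega) (by omega))
        (pt_ne m (by omega) (by omega) (by omega))
        (pt_ne m (by omega) (by omega) (by omega))).isCycle

lemma ct3 : (x3 m).cycleType = 2 ::ₘ Multiset.replicate m 3 := by
  rw [Perm.cycleType_eq (σ := x3 m) (l3 m) rfl ?_ (pd3 hm)]
  · rw [l3, List.map_cons, List.map_cons, ← Multiset.cons_coe, ← Multiset.cons_coe]
    rw [show Multiset.replicate m 3 = 3 ::ₘ Multiset.replicate (m-1) 3 from by
      rw [← Multiset.replicate_succ]; congr 1; omega]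
    congr 1
    · exact Perm.card_support_swap (pt_ne m (by omega) (by omega) (by omega))
    congr 1
    · exact cyc_support_card (pt_ne m (by omega) (by omega) (by omega))
        (pt_ne m (by omega) (by omega) (by omega)) (pt_ne m (by omega) (by omega) (by omega))
    · rw [Multiset.eq_replicate]
      constructor
      · simp
      · intro b hb
        rw [Multiset.mem_coe, List.mem_map] at hb
        obtain ⟨g, hg, rfl⟩ := hb
        obtain ⟨k, hk, rfl⟩ := List.mem_map.mp hg
        rw [List.mem_range] at hk
        exact cyc_support_card (pt_ne m (by omega) (by omega) (by omega))
          (pt_ne m (by omega) (by omega) (by omega)) (pt_ne m (by omega) (by omega) (by omega))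
  · intro g hg
    rcases List.mem_cons.mp hg with rfl | hg
    · exact Equiv.Perm.isCycle_swap (pt_ne m (by omega) (by omega) (by omega))
    rcases List.mem_cons.mp hg with rfl | hg
    · exact (cyc_isThreeCycle (pt_ne m (by omega) (by omega) (by omega))
        (pt_ne m (by omega) (by omega) (by omega))
        (pt_ne m (by omega) (by omega) (by omega))).isCycle
    · obtain ⟨k, hk, rfl⟩ := List.mem_map.mp hg
      rw [List.mem_range] at hk
      exact (cyc_isThreeCycle (pt_ne m (by omega) (by omega) (by omega))
        (pt_ne m (by omega) (by omega) (by omega))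
        (pt_ne m (by omega) (by omega) (by omega))).isCycle

/- ### generation -/

omit hm in
lemma cj {g : Perm (Fin (3*m+2))} {H : Subgroup (Perm (Fin (3*m+2)))} (hg : g ∈ H)
    {a b : Fin (3*m+2)} (h : Equiv.swap a b ∈ H) : Equiv.swap (g a) (g b) ∈ H := by
  rw [Equiv.swap_apply_apply]
  exact mul_mem (mul_mem hg h) (inv_mem hg)

end eval

section gen

variable {m : ℕ} (hm : 3 ≤ m)

local notation "H" => Subgroup.closure ({x1 m, x2 m, x3 m} : Set (Perm (Fin (3*m+2))))

lemma hx1 : x1 m ∈ H := Subgroup.subset_closure (by simp)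
lemma hx2 : x2 m ∈ H := Subgroup.subset_closure (by simp)
lemma hx3 : x3 m ∈ H := Subgroup.subset_closure (by simp)

lemma hT : Equiv.swap (pt m 0) (pt m (3*m+1)) ∈ H := by
  rw [← x2_cube]
  exact pow_mem hx2 3

include hm

lemma h13 : Equiv.swap (pt m 1) (pt m 3) ∈ H := by
  rw [← x3_cube hm]
  exact pow_mem hx3 3

lemma sw21 : Equiv.swap (pt m 2) (pt m 1) ∈ H := by
  have h := cj hx2 (h13 hm)
  rw [show pt m 1 = pt m (3*0+1) from pt_eq m _ _ (by norm_num),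
    show pt m 3 = pt m (3*0+3) from pt_eq m _ _ (by norm_num),
    x2_a (by omega), x2_c (by omega)] at h
  exact h

lemma sw32 : Equiv.swap (pt m 3) (pt m 2) ∈ H := by
  have h := cj hx2 (sw21 hm)
  rw [show pt m 2 = pt m (3*0+2) from pt_eq m _ _ (by norm_num),
    show pt m 1 = pt m (3*0+1) from pt_eq m _ _ (by norm_num),
    x2_b (by omega), x2_a (by omega)] at h
  exact h

lemma x3_3k3 {k : ℕ} (hk : k+1 < m) : x3 m (pt m (3*k+3)) = pt m (3*k+1) := by
  rcases Nat.eq_zero_or_pos k with rfl | hpos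
  · rw [show pt m (3*0+3) = pt m 3 from pt_eq m _ _ (by norm_num), x3_3 hm]
  · rw [show pt m (3*k+3) = pt m (3*(k-1)+6) from pt_eq m _ _ (by omega), x3_b hm (by omega)]
    exact pt_eq m _ _ (by omega)

lemma ladder {k : ℕ} (hk : k+1 < m)
    (hU : Equiv.swap (pt m (3*k+2)) (pt m (3*k+3)) ∈ H) :
    Equiv.swap (pt m (3*k+4)) (pt m (3*k+6)) ∈ H ∧
      Equiv.swap (pt m (3*k+5)) (pt m (3*k+6)) ∈ H := by
  have hA := cj hx3 hU
  rw [x3_a hm (by omega), x3_3k3 hm hk] at hA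
  -- hA : swap (pt (3k+6)) (pt (3k+1)) ∈ H
  have hB := cj hx2 hA
  rw [show pt m (3*k+6) = pt m (3*(k+1)+3) from pt_eq m _ _ (by omega),
    x2_c (by omega), x2_a (by omega),
    show pt m (3*(k+1)+1) = pt m (3*k+4) from pt_eq m _ _ (by omega)] at hB
  -- hB : swap (pt (3k+4)) (pt (3k+2)) ∈ H
  have hC := cj hx3 hB
  rw [x3_c hm (by omega), x3_a hm (by omega)] at hC
  -- hC : swap (pt (3k+2)) (pt (3k+6)) ∈ H
  have hD := SubmonoidClass.swap_mem_trans _ hB hC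
  -- hD : swap (pt (3k+4)) (pt (3k+6)) ∈ H
  have hE := cj hx2 hD
  rw [show pt m (3*k+4) = pt m (3*(k+1)+1) from pt_eq m _ _ (by omega),
    show pt m (3*k+6) = pt m (3*(k+1)+3) from pt_eq m _ _ (by omega),
    x2_a (by omega), x2_c (by omega),
    show pt m (3*(k+1)+2) = pt m (3*k+5) from pt_eq m _ _ (by omega),
    show pt m (3*(k+1)+1) = pt m (3*k+4) from pt_eq m _ _ (by omega)] at hE
  -- hE : swap (pt (3k+5)) (pt (3k+4)) ∈ H
  have hF := SubmonoidClass.swap_mem_trans _ hE hD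
  exact ⟨hD, hF⟩

lemma U_mem : ∀ k, k < m → Equiv.swap (pt m (3*k+2)) (pt m (3*k+3)) ∈ H := by
  intro k
  induction k with
  | zero =>
      intro _
      have h := sw32 hm
      rw [Equiv.swap_comm] at h
      rw [show pt m (3*0+2) = pt m 2 from pt_eq m _ _ (by norm_num),
        show pt m (3*0+3) = pt m 3 from pt_eq m _ _ (by norm_num)]
      exact h
  | succ k ih =>
      intro hk
      have h := (ladder hm (by omega) (ih (by omega))).2
      rw [show pt m (3*(k+1)+2) = pt m (3*k+5) from pt_eq m _ _ (by omega)]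
      rw [show pt m (3*k+6) = pt m (3*(k+1)+3) from pt_eq m _ _ (by omega)] at h
      exact h

lemma U_mem' {k : ℕ} (hk : k < m) : Equiv.swap (pt m (3*k+3)) (pt m (3*k+4)) ∈ H := by
  have h := cj hx1 (U_mem hm k hk)
  rw [(x1_eval hk).1, (x1_eval hk).2.1] at h
  exact h

lemma Q_mem : ∀ k, k < m → Equiv.swap (pt m 1) (pt m (3*k+2)) ∈ H ∧
    Equiv.swap (pt m 1) (pt m (3*k+3)) ∈ H ∧ Equiv.swap (pt m 1) (pt m (3*k+4)) ∈ H := by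
  intro k
  induction k with
  | zero =>
      intro _
      refine ⟨?_, ?_, ?_⟩
      · have h := sw21 hm
        rw [Equiv.swap_comm] at h
        rw [show pt m (3*0+2) = pt m 2 from pt_eq m _ _ (by norm_num)]
        exact h
      · rw [show pt m (3*0+3) = pt m 3 from pt_eq m _ _ (by norm_num)]
        exact h13 hm
      · exact SubmonoidClass.swap_mem_trans _ (h13 hm) (U_mem' hm (k := 0) (by omega))
  | succ k ih =>
      intro hk
      obtain ⟨q2, q3, q4⟩ := ih (by omega)
      have hD := (ladder hm (by omega) (U_mem hm k (by omega))).1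
      have hE := (ladder hm (by omega) (U_mem hm k (by omega))).2
      -- hD : swap (pt (3k+4)) (pt (3(k+1)+3)) ∈ H  (after ladder's normalization)
      have q6 : Equiv.swap (pt m 1) (pt m (3*(k+1)+3)) ∈ H := by
        have h := SubmonoidClass.swap_mem_trans _ q4 hD
        rw [show pt m (3*k+6) = pt m (3*(k+1)+3) from pt_eq m _ _ (by omega)] at h
        exact h
      refine ⟨?_, q6, ?_⟩
      · have h := SubmonoidClass.swap_mem_trans _ q6 (by
          rw [Equiv.swap_comm]
          rw [show pt m (3*k+6) = pt m (3*(k+1)+3) from pt_eq m _ _ (by omega)] at hE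
          exact hE)
        rw [show pt m (3*k+5) = pt m (3*(k+1)+2) from pt_eq m _ _ (by omega)] at h
        exact h
      · exact SubmonoidClass.swap_mem_trans _ q6 (U_mem' hm hk)

lemma Q0 : Equiv.swap (pt m 1) (pt m 0) ∈ H := by
  have h := SubmonoidClass.swap_mem_trans _ (Q_mem hm (m-1) (by omega)).2.2 (by
    rw [Equiv.swap_comm, show pt m (3*(m-1)+4) = pt m (3*m+1) from pt_eq m _ _ (by omega)]
    exact hT)
  exact h

lemma key_swaps : ∀ v, v < 3*m+2 → v ≠ 1 → Equiv.swap (pt m 1) (pt m v) ∈ H := by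
  intro v hv hv1
  obtain h | h : v = 0 ∨ ((v-2)/3 < m ∧
      (v = 3*((v-2)/3)+2 ∨ v = 3*((v-2)/3)+3 ∨ v = 3*((v-2)/3)+4)) := by omega
  · rw [h]; exact Q0 hm
  · obtain ⟨hk, h2 | h2 | h2⟩ := h
    · rw [h2]; exact (Q_mem hm _ hk).1
    · rw [h2]; exact (Q_mem hm _ hk).2.1
    · rw [h2]; exact (Q_mem hm _ hk).2.2

lemma swaps_mem (a b : Fin (3*m+2)) : Equiv.swap a b ∈ H := by
  rcases eq_or_ne a b with rfl | hab
  · rw [show Equiv.swap a a = 1 from by ext x; simp]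
    exact Subgroup.one_mem _
  have ha := pt_of_fin (m := m) a
  have hb := pt_of_fin (m := m) b
  have hvne : (a.1 : ℕ) ≠ b.1 := fun h => hab (Fin.ext h)
  rcases eq_or_ne (a.1 : ℕ) 1 with h1 | h1
  · rw [ha, hb, h1]
    exact key_swaps hm b.1 b.2 (by omega)
  rcases eq_or_ne (b.1 : ℕ) 1 with h2 | h2
  · rw [Equiv.swap_comm, ha, hb, h2]
    exact key_swaps hm a.1 a.2 (by omega)
  · rw [ha, hb]
    refine SubmonoidClass.swap_mem_trans _ ?_ (key_swaps hm b.1 b.2 h2)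
    rw [Equiv.swap_comm]
    exact key_swaps hm a.1 a.2 h1

lemma alt_le : alternatingGroup (Fin (3*m+2)) ≤ H := by
  refine le_trans le_top ?_
  rw [← Equiv.Perm.closure_isSwap]
  rw [Subgroup.closure_le]
  intro σ hσ
  obtain ⟨a, b, hab, rfl⟩ := hσ
  exact swaps_mem hm a b

end gen

end S17



/-- **Lemma 9.2, case F2.2**: for every `ℓ ≥ 9` with `ℓ ≡ 2 (mod 3)` there is a
product-one triple `x₁·x₂·x₃ = 1` in `Sym(ℓ)` generating a subgroup containing
`Alt(ℓ)`, where `x₁` has cycle type `[1²,3^{(ℓ−2)/3}]` (two fixed points) and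
`x₂, x₃` both have cycle type `[2,3^{(ℓ−2)/3}]` (no fixed points). -/
theorem statement17 (ℓ : ℕ) (hℓ : 9 ≤ ℓ) (h3 : ℓ % 3 = 2) :
    ∃ x₁ x₂ x₃ : Equiv.Perm (Fin ℓ),
      x₁ * x₂ * x₃ = 1 ∧
      alternatingGroup (Fin ℓ) ≤ Subgroup.closure {x₁, x₂, x₃} ∧
      x₁.cycleType = Multiset.replicate ((ℓ - 2) / 3) 3 ∧
      x₂.cycleType = 2 ::ₘ Multiset.replicate ((ℓ - 2) / 3) 3 ∧
      x₃.cycleType = 2 ::ₘ Multiset.replicate ((ℓ - 2) / 3) 3 := by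
  obtain ⟨m, hm, rfl⟩ : ∃ m, 3 ≤ m ∧ ℓ = 3*m+2 := ⟨(ℓ-2)/3, by omega, by omega⟩
  have hdiv : (3*m+2 - 2) / 3 = m := by omega
  rw [hdiv]
  exact ⟨S17.x1 m, S17.x2 m, S17.x3 m, S17.prod_one hm, S17.alt_le hm, S17.ct1,
    S17.ct2, S17.ct3 hm⟩
end

section
/- For every integer ℓ ≥ 9 with ℓ ≡ 1 (mod 3) there exist x₁, x₂, x₃ ∈ Sym(ℓ) such that x₁·x₂·x₃ = 1, the subgroup generated by x₁, x₂, x₃ contains Alt(ℓ), x₁ is a product of two disjoint 2-cycles and (ℓ−4)/3 pairwise disjoint 3-cycles, with no fixed points (cycle type [2²,3^{(ℓ−4)/3}]), and each of x₂ and x₃ is a product of (ℓ−1)/3 pairwise disjoint 3-cycles with exactly one fixed point (cycle type [1,3^{(ℓ−1)/3}]). -/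
set_option linter.unusedSectionVars false

open Equiv Equiv.Perm

namespace F23

variable {α : Type*} [DecidableEq α]

/-- the 3-cycle a → b → c → a -/
def c3 (a b c : α) : Equiv.Perm α := Equiv.swap a b * Equiv.swap b c

theorem c3_apply_a {a b c : α} (hab : a ≠ b) (hac : a ≠ c) : c3 a b c a = b := by
  simp only [c3, Perm.mul_apply]
  rw [Equiv.swap_apply_of_ne_of_ne hab hac, Equiv.swap_apply_left]

theorem c3_apply_b {a b c : α} (hac : a ≠ c) (hbc : b ≠ c) : c3 a b c b = c := by
  simp only [c3, Perm.mul_apply]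
  rw [Equiv.swap_apply_left, Equiv.swap_apply_of_ne_of_ne (Ne.symm hac) (Ne.symm hbc)]

theorem c3_apply_c {a b c : α} : c3 a b c c = a := by
  simp only [c3, Perm.mul_apply]
  rw [Equiv.swap_apply_right, Equiv.swap_apply_right]

theorem c3_apply_ne {a b c x : α} (hxa : x ≠ a) (hxb : x ≠ b) (hxc : x ≠ c) :
    c3 a b c x = x := by
  simp only [c3, Perm.mul_apply]
  rw [Equiv.swap_apply_of_ne_of_ne hxb hxc, Equiv.swap_apply_of_ne_of_ne hxa hxb]

theorem c3_rot {a b c : α} (hab : a ≠ b) (hbc : b ≠ c) (hac : a ≠ c) :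
    c3 a b c = c3 b c a := by
  ext x
  by_cases hxa : x = a
  · subst hxa; rw [c3_apply_a hab hac, c3_apply_c]
  by_cases hxb : x = b
  · subst hxb; rw [c3_apply_b hac hbc, c3_apply_a hbc (Ne.symm hab)]
  by_cases hxc : x = c
  · subst hxc; rw [c3_apply_c, c3_apply_b (Ne.symm hab) (Ne.symm hac)]
  · rw [c3_apply_ne hxa hxb hxc, c3_apply_ne hxb hxc hxa]

theorem c3_inv {a b c : α} : (c3 a b c)⁻¹ = c3 c b a := by
  rw [c3, c3, mul_inv_rev, Equiv.swap_inv, Equiv.swap_inv, Equiv.swap_comm c b,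
    Equiv.swap_comm b a]

theorem c3_conj (g : Perm α) (a b c : α) :
    g * c3 a b c * g⁻¹ = c3 (g a) (g b) (g c) := by
  rw [c3, c3, Equiv.swap_apply_apply, Equiv.swap_apply_apply]
  group

theorem c3_isThreeCycle [Fintype α] {a b c : α} (hab : a ≠ b) (hbc : b ≠ c) (hac : a ≠ c) :
    IsThreeCycle (c3 a b c) := by
  rw [c3, Equiv.swap_comm a b]
  exact isThreeCycle_swap_mul_swap_same (Ne.symm hab) hbc hac

/-! ### Links -/

variable (H : Subgroup (Perm α))

def L3 (a b c : α) : Prop := c3 a b c ∈ H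

variable {H}

theorem L3.rot {a b c : α} (hab : a ≠ b) (hbc : b ≠ c) (hac : a ≠ c)
    (h : L3 H a b c) : L3 H b c a := by
  rwa [L3, ← c3_rot hab hbc hac]

theorem L3.rev {a b c : α} (h : L3 H a b c) : L3 H c b a := by
  rw [L3, ← c3_inv]
  exact inv_mem h

theorem L3.conj {g : Perm α} (hg : g ∈ H) {a b c : α} (h : L3 H a b c) :
    L3 H (g a) (g b) (g c) := by
  rw [L3, ← c3_conj]
  exact mul_mem (mul_mem hg h) (inv_mem hg)

def ALT3 (H : Subgroup (Perm α)) (S : Set α) : Prop :=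
  ∀ a ∈ S, ∀ b ∈ S, ∀ c ∈ S, a ≠ b → b ≠ c → a ≠ c → L3 H a b c


theorem ALT3.move_fst {S : Set α} (hS : ALT3 H S) {x y r : α} (hx : x ∈ S) (hy : y ∈ S)
    (hxy : x ≠ y) (hr : r ∉ S) (h : L3 H x y r) :
    ∀ x' ∈ S, x' ≠ y → L3 H x' y r := by
  intro x' hx' hx'y
  have hrx : r ≠ x := fun hh => hr (hh ▸ hx)
  have hry : r ≠ y := fun hh => hr (hh ▸ hy)
  have hrx' : r ≠ x' := fun hh => hr (hh ▸ hx')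
  by_cases hxx : x' = x
  · subst hxx; exact h
  have hxx' : x ≠ x' := fun hh => hxx hh.symm
  by_cases hw : ∃ w ∈ S, w ≠ x ∧ w ≠ x' ∧ w ≠ y
  · obtain ⟨w, hwS, hw1, hw2, hw3⟩ := hw
    have hg : c3 x x' w ∈ H :=
      hS x hx x' hx' w hwS hxx' hw2.symm hw1.symm
    have hc := h.conj hg
    rwa [c3_apply_a hxx' hw1.symm, c3_apply_ne hxy.symm hx'y.symm hw3.symm,
      c3_apply_ne hrx hrx' (fun hh => hr (hh ▸ hwS))] at hc
  · push_neg at hw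
    have hg : c3 x x' y ∈ H := hS x hx x' hx' y hy hxx' hx'y hxy
    have h1 := h.conj hg
    rw [c3_apply_a hxx' hxy, c3_apply_c, c3_apply_ne hrx hrx' hry] at h1
    -- h1 : L3 H x' x r
    have h2 := h1.conj hg
    rw [c3_apply_b hxy hx'y, c3_apply_a hxx' hxy, c3_apply_ne hrx hrx' hry] at h2
    -- h2 : L3 H y x' r
    -- want L3 H x' y r
    exact (h2.rev).rot hrx' hx'y hry

theorem ALT3.move {S : Set α} (hS : ALT3 H S) {x y r : α} (hx : x ∈ S) (hy : y ∈ S)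
    (hxy : x ≠ y) (hr : r ∉ S) (h : L3 H x y r) :
    ∀ x' ∈ S, ∀ y' ∈ S, x' ≠ y' → L3 H x' y' r := by
  intro x' hx' y' hy' hne
  have hrx : r ≠ x := fun hh => hr (hh ▸ hx)
  have hry : r ≠ y := fun hh => hr (hh ▸ hy)
  have hrx' : r ≠ x' := fun hh => hr (hh ▸ hx')
  have hry' : r ≠ y' := fun hh => hr (hh ▸ hy')
  -- L3 H y x r
  have hyx : L3 H y x r := (h.rev).rot hry hxy.symm hrx
  by_cases hy'x : y' = x
  · subst hy'x
    exact hS.move_fst hy hx hxy.symm hr hyx x' hx' hne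
  · have step1 : L3 H y' x r := hS.move_fst hy hx hxy.symm hr hyx y' hy' hy'x
    have step1' : L3 H x y' r := (step1.rev).rot hrx (fun hh => hy'x hh.symm) hry'
    exact hS.move_fst hx hy' (fun hh => hy'x hh.symm) hr step1' x' hx' hne

theorem ALT3.insert {S : Set α} (hS : ALT3 H S) {a b r : α} (ha : a ∈ S) (hb : b ∈ S)
    (hab : a ≠ b) (hr : r ∉ S) (h : L3 H a b r) : ALT3 H (insert r S) := by
  have key : ∀ x' ∈ S, ∀ y' ∈ S, x' ≠ y' → L3 H x' y' r := hS.move ha hb hab hr h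
  intro u hu v hv w hw huv hvw huw
  rcases hu with rfl | hu
  · have hvS : v ∈ S := hv.resolve_left (fun hh => huv hh.symm)
    have hwS : w ∈ S := hw.resolve_left (fun hh => huw hh.symm)
    exact ((key v hvS w hwS hvw).rot hvw huw.symm huv.symm).rot huw.symm huv hvw.symm
  rcases hv with rfl | hv
  · have hwS : w ∈ S := hw.resolve_left (fun hh => hvw hh.symm)
    exact (key w hwS u hu (fun hh => huw hh.symm)).rot huw.symm huv hvw.symm
  rcases hw with rfl | hw
  · exact key u hu v hv huv
  · exact hS u hu v hv w hw huv hvw huw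

theorem ALT3_triple {p q r : α} (hpq : p ≠ q) (hqr : q ≠ r) (hpr : p ≠ r)
    (h : L3 H p q r) : ALT3 H {p, q, r} := by
  have h1 : L3 H q r p := h.rot hpq hqr hpr
  have h2 : L3 H r p q := h1.rot hqr hpr.symm hpq.symm
  have h3 : L3 H r q p := h.rev
  have h4 : L3 H q p r := h3.rot hqr.symm hpq.symm hpr.symm
  have h5 : L3 H p r q := h4.rot hpq.symm hpr hqr
  intro a ha b hb c hc hab hbc hac
  simp only [Set.mem_insert_iff, Set.mem_singleton_iff] at ha hb hc
  rcases ha with rfl | rfl | rfl <;> rcases hb with rfl | rfl | rfl <;>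
    rcases hc with rfl | rfl | rfl <;>
    first
      | exact absurd rfl hab | exact absurd rfl hbc | exact absurd rfl hac
      | exact h | exact h1 | exact h2 | exact h3 | exact h4 | exact h5


theorem ALT3.mono {H : Subgroup (Perm α)} {S T : Set α} (hS : ALT3 H S) (hTS : T ⊆ S) :
    ALT3 H T := fun a ha b hb c hc hab hbc hac =>
  hS a (hTS ha) b (hTS hb) c (hTS hc) hab hbc hac

/-! ### Evaluation of products -/

theorem list_prod_apply_fixed (l : List (Perm α)) (x : α) (h : ∀ σ ∈ l, σ x = x) :
    l.prod x = x := by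
  induction l with
  | nil => simp
  | cons σ l ih =>
    rw [List.prod_cons, Perm.mul_apply, ih (fun τ hτ => h τ (List.mem_cons_of_mem _ hτ)),
      h σ List.mem_cons_self]

theorem range_map_prod_apply {f : ℕ → Perm α} {n i : ℕ} (hi : i < n) {x y : α}
    (hx : f i x = y) (hfix : ∀ j, j < n → j ≠ i → f j x = x ∧ f j y = y) :
    ((List.range n).map f).prod x = y := by
  induction n with
  | zero => omega
  | succ n ih =>
    rw [List.range_succ, List.map_append, List.prod_append]
    simp only [List.map_cons, List.map_nil, List.prod_cons, List.prod_nil, mul_one,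
      Perm.mul_apply]
    rcases Nat.lt_succ_iff_lt_or_eq.mp hi with hi' | rfl
    · rw [(hfix n (Nat.lt_succ_self n) (by omega)).1]
      exact ih hi' (fun j hj hji => hfix j (by omega) hji)
    · rw [hx]
      apply list_prod_apply_fixed
      intro σ hσ
      obtain ⟨j, hj, rfl⟩ := List.mem_map.mp hσ
      exact (hfix j (by rw [List.mem_range] at hj; omega) (by rw [List.mem_range] at hj; omega)).2

/-! ### The construction -/

def pt (m k : ℕ) : Fin (3 * m + 1) := ⟨k % (3 * m + 1), Nat.mod_lt _ (by omega)⟩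

theorem pt_val {m k : ℕ} (h : k < 3 * m + 1) : (pt m k).val = k := Nat.mod_eq_of_lt h

theorem pt_ne {m a b : ℕ} (ha : a < 3 * m + 1) (hb : b < 3 * m + 1) (hab : a ≠ b) :
    pt m a ≠ pt m b := by
  intro h
  apply hab
  have := congrArg Fin.val h
  rwa [pt_val ha, pt_val hb] at this

def XA (m i : ℕ) : Perm (Fin (3 * m + 1)) :=
  c3 (pt m (3 * i)) (pt m (3 * i + 1)) (pt m (3 * i + 2))

def XB (m i : ℕ) : Perm (Fin (3 * m + 1)) :=
  c3 (pt m (3 * i + 1)) (pt m (3 * i + 2)) (pt m (3 * i + 3))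

def XC (m i : ℕ) : Perm (Fin (3 * m + 1)) :=
  c3 (pt m (3 * i + 2)) (pt m (3 * i + 3)) (pt m (3 * i + 4))

def X2 (m : ℕ) : Perm (Fin (3 * m + 1)) := ((List.range m).map (XA m)).prod

def X3 (m : ℕ) : Perm (Fin (3 * m + 1)) := ((List.range m).map (XB m)).prod

def X1 (m : ℕ) : Perm (Fin (3 * m + 1)) :=
  Equiv.swap (pt m 0) (pt m 1) * Equiv.swap (pt m (3 * m - 1)) (pt m (3 * m)) *
    ((List.range (m - 1)).map (XC m)).prod


theorem inv_eval {β : Type*} (σ : Perm β) {x y : β} (h : σ y = x) : σ⁻¹ x = y := by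
  rw [← h]; exact Equiv.symm_apply_apply σ y

section evals

variable {m v : ℕ}

theorem X2_apply_0 (h3 : v % 3 = 0) (hv : v < 3 * m) : X2 m (pt m v) = pt m (v + 1) := by
  obtain ⟨i, rfl⟩ : ∃ i, v = 3 * i := ⟨v / 3, by omega⟩
  have hi : i < m := by omega
  refine range_map_prod_apply hi ?_ ?_
  · simp only [XA]
    exact c3_apply_a (pt_ne (by omega) (by omega) (by omega)) (pt_ne (by omega) (by omega) (by omega))
  · intro j hj hji
    simp only [XA]
    constructor <;> exact c3_apply_ne (pt_ne (by omega) (by omega) (by omega)) (pt_ne (by omega) (by omega) (by omega)) (pt_ne (by omega) (by omega) (by omega))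

theorem X2_apply_1 (h3 : v % 3 = 1) (hv : v < 3 * m) : X2 m (pt m v) = pt m (v + 1) := by
  obtain ⟨i, rfl⟩ : ∃ i, v = 3 * i + 1 := ⟨v / 3, by omega⟩
  have hi : i < m := by omega
  refine range_map_prod_apply hi ?_ ?_
  · simp only [XA]
    exact c3_apply_b (pt_ne (by omega) (by omega) (by omega)) (pt_ne (by omega) (by omega) (by omega))
  · intro j hj hji
    simp only [XA]
    constructor <;> exact c3_apply_ne (pt_ne (by omega) (by omega) (by omega)) (pt_ne (by omega) (by omega) (by omega)) (pt_ne (by omega) (by omega) (by omega))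

theorem X2_apply_2 (h3 : v % 3 = 2) (hv : v < 3 * m) : X2 m (pt m v) = pt m (v - 2) := by
  obtain ⟨i, rfl⟩ : ∃ i, v = 3 * i + 2 := ⟨v / 3, by omega⟩
  have hi : i < m := by omega
  have e : 3 * i + 2 - 2 = 3 * i := by omega
  rw [e]
  refine range_map_prod_apply hi ?_ ?_
  · simp only [XA]
    exact c3_apply_c
  · intro j hj hji
    simp only [XA]
    constructor <;> exact c3_apply_ne (pt_ne (by omega) (by omega) (by omega)) (pt_ne (by omega) (by omega) (by omega)) (pt_ne (by omega) (by omega) (by omega))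

theorem X2_fix_top : X2 m (pt m (3 * m)) = pt m (3 * m) := by
  apply list_prod_apply_fixed
  intro σ hσ
  obtain ⟨j, hj, rfl⟩ := List.mem_map.mp hσ
  rw [List.mem_range] at hj
  simp only [XA]
  exact c3_apply_ne (pt_ne (by omega) (by omega) (by omega)) (pt_ne (by omega) (by omega) (by omega)) (pt_ne (by omega) (by omega) (by omega))

theorem X3_apply_1 (h3 : v % 3 = 1) (hv : v < 3 * m) : X3 m (pt m v) = pt m (v + 1) := by
  obtain ⟨i, rfl⟩ : ∃ i, v = 3 * i + 1 := ⟨v / 3, by omega⟩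
  have hi : i < m := by omega
  refine range_map_prod_apply hi ?_ ?_
  · simp only [XB]
    exact c3_apply_a (pt_ne (by omega) (by omega) (by omega)) (pt_ne (by omega) (by omega) (by omega))
  · intro j hj hji
    simp only [XB]
    constructor <;> exact c3_apply_ne (pt_ne (by omega) (by omega) (by omega)) (pt_ne (by omega) (by omega) (by omega)) (pt_ne (by omega) (by omega) (by omega))

theorem X3_apply_2 (h3 : v % 3 = 2) (hv : v < 3 * m) : X3 m (pt m v) = pt m (v + 1) := by
  obtain ⟨i, rfl⟩ : ∃ i, v = 3 * i + 2 := ⟨v / 3, by omega⟩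
  have hi : i < m := by omega
  refine range_map_prod_apply hi ?_ ?_
  · simp only [XB]
    exact c3_apply_b (pt_ne (by omega) (by omega) (by omega)) (pt_ne (by omega) (by omega) (by omega))
  · intro j hj hji
    simp only [XB]
    constructor <;> exact c3_apply_ne (pt_ne (by omega) (by omega) (by omega)) (pt_ne (by omega) (by omega) (by omega)) (pt_ne (by omega) (by omega) (by omega))

theorem X3_apply_0 (h3 : v % 3 = 0) (h0 : 0 < v) (hv : v ≤ 3 * m) :
    X3 m (pt m v) = pt m (v - 2) := by
  obtain ⟨i, rfl⟩ : ∃ i, v = 3 * i + 3 := ⟨v / 3 - 1, by omega⟩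
  have hi : i < m := by omega
  have e : 3 * i + 3 - 2 = 3 * i + 1 := by omega
  rw [e]
  refine range_map_prod_apply hi ?_ ?_
  · simp only [XB]
    exact c3_apply_c
  · intro j hj hji
    simp only [XB]
    constructor <;> exact c3_apply_ne (pt_ne (by omega) (by omega) (by omega)) (pt_ne (by omega) (by omega) (by omega)) (pt_ne (by omega) (by omega) (by omega))

theorem X3_fix_bot : X3 m (pt m 0) = pt m 0 := by
  apply list_prod_apply_fixed
  intro σ hσ
  obtain ⟨j, hj, rfl⟩ := List.mem_map.mp hσ
  rw [List.mem_range] at hj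
  simp only [XB]
  exact c3_apply_ne (pt_ne (by omega) (by omega) (by omega)) (pt_ne (by omega) (by omega) (by omega)) (pt_ne (by omega) (by omega) (by omega))

variable (hm : 3 ≤ m)
include hm

theorem X1_a (h3 : v % 3 = 2) (hv : v < 3 * m - 2) : X1 m (pt m v) = pt m (v + 1) := by
  obtain ⟨i, rfl⟩ : ∃ i, v = 3 * i + 2 := ⟨v / 3, by omega⟩
  have hi : i < m - 1 := by omega
  simp only [X1, Perm.mul_apply]
  rw [range_map_prod_apply hi (f := XC m) (y := pt m (3 * i + 2 + 1)) ?_ ?_]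
  · rw [Equiv.swap_apply_of_ne_of_ne (pt_ne (by omega) (by omega) (by omega)) (pt_ne (by omega) (by omega) (by omega)),
      Equiv.swap_apply_of_ne_of_ne (pt_ne (by omega) (by omega) (by omega)) (pt_ne (by omega) (by omega) (by omega))]
  · simp only [XC]
    have e : 3 * i + 2 + 1 = 3 * i + 3 := by omega
    rw [e]
    exact c3_apply_a (pt_ne (by omega) (by omega) (by omega)) (pt_ne (by omega) (by omega) (by omega))
  · intro j hj hji
    simp only [XC]
    constructor <;> exact c3_apply_ne (pt_ne (by omega) (by omega) (by omega)) (pt_ne (by omega) (by omega) (by omega)) (pt_ne (by omega) (by omega) (by omega))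

theorem X1_b (h3 : v % 3 = 0) (h0 : 0 < v) (hv : v ≤ 3 * m - 3) :
    X1 m (pt m v) = pt m (v + 1) := by
  obtain ⟨i, rfl⟩ : ∃ i, v = 3 * i + 3 := ⟨v / 3 - 1, by omega⟩
  have hi : i < m - 1 := by omega
  simp only [X1, Perm.mul_apply]
  rw [range_map_prod_apply hi (f := XC m) (y := pt m (3 * i + 3 + 1)) ?_ ?_]
  · rw [Equiv.swap_apply_of_ne_of_ne (pt_ne (by omega) (by omega) (by omega)) (pt_ne (by omega) (by omega) (by omega)),
      Equiv.swap_apply_of_ne_of_ne (pt_ne (by omega) (by omega) (by omega)) (pt_ne (by omega) (by omega) (by omega))]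
  · simp only [XC]
    have e : 3 * i + 3 + 1 = 3 * i + 4 := by omega
    rw [e]
    exact c3_apply_b (pt_ne (by omega) (by omega) (by omega)) (pt_ne (by omega) (by omega) (by omega))
  · intro j hj hji
    simp only [XC]
    constructor <;> exact c3_apply_ne (pt_ne (by omega) (by omega) (by omega)) (pt_ne (by omega) (by omega) (by omega)) (pt_ne (by omega) (by omega) (by omega))

theorem X1_c (h3 : v % 3 = 1) (h0 : 4 ≤ v) (hv : v ≤ 3 * m - 2) :
    X1 m (pt m v) = pt m (v - 2) := by
  obtain ⟨i, rfl⟩ : ∃ i, v = 3 * i + 4 := ⟨v / 3 - 1, by omega⟩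
  have hi : i < m - 1 := by omega
  have e : 3 * i + 4 - 2 = 3 * i + 2 := by omega
  rw [e]
  simp only [X1, Perm.mul_apply]
  rw [range_map_prod_apply hi (f := XC m) (y := pt m (3 * i + 2)) ?_ ?_]
  · rw [Equiv.swap_apply_of_ne_of_ne (pt_ne (by omega) (by omega) (by omega)) (pt_ne (by omega) (by omega) (by omega)),
      Equiv.swap_apply_of_ne_of_ne (pt_ne (by omega) (by omega) (by omega)) (pt_ne (by omega) (by omega) (by omega))]
  · simp only [XC]
    exact c3_apply_c
  · intro j hj hji
    simp only [XC]
    constructor <;> exact c3_apply_ne (pt_ne (by omega) (by omega) (by omega)) (pt_ne (by omega) (by omega) (by omega)) (pt_ne (by omega) (by omega) (by omega))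

theorem X1_z : X1 m (pt m 0) = pt m 1 := by
  simp only [X1, Perm.mul_apply]
  rw [list_prod_apply_fixed _ _ ?_, Equiv.swap_apply_of_ne_of_ne (pt_ne (by omega) (by omega) (by omega)) (pt_ne (by omega) (by omega) (by omega)),
    Equiv.swap_apply_left]
  intro σ hσ
  obtain ⟨j, hj, rfl⟩ := List.mem_map.mp hσ
  rw [List.mem_range] at hj
  simp only [XC]
  exact c3_apply_ne (pt_ne (by omega) (by omega) (by omega)) (pt_ne (by omega) (by omega) (by omega)) (pt_ne (by omega) (by omega) (by omega))

theorem X1_o : X1 m (pt m 1) = pt m 0 := by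
  simp only [X1, Perm.mul_apply]
  rw [list_prod_apply_fixed _ _ ?_, Equiv.swap_apply_of_ne_of_ne (pt_ne (by omega) (by omega) (by omega)) (pt_ne (by omega) (by omega) (by omega)),
    Equiv.swap_apply_right]
  intro σ hσ
  obtain ⟨j, hj, rfl⟩ := List.mem_map.mp hσ
  rw [List.mem_range] at hj
  simp only [XC]
  exact c3_apply_ne (pt_ne (by omega) (by omega) (by omega)) (pt_ne (by omega) (by omega) (by omega)) (pt_ne (by omega) (by omega) (by omega))

theorem X1_p : X1 m (pt m (3 * m - 1)) = pt m (3 * m) := by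
  simp only [X1, Perm.mul_apply]
  rw [list_prod_apply_fixed _ _ ?_, Equiv.swap_apply_left,
    Equiv.swap_apply_of_ne_of_ne (pt_ne (by omega) (by omega) (by omega)) (pt_ne (by omega) (by omega) (by omega))]
  intro σ hσ
  obtain ⟨j, hj, rfl⟩ := List.mem_map.mp hσ
  rw [List.mem_range] at hj
  simp only [XC]
  exact c3_apply_ne (pt_ne (by omega) (by omega) (by omega)) (pt_ne (by omega) (by omega) (by omega)) (pt_ne (by omega) (by omega) (by omega))

theorem X1_q : X1 m (pt m (3 * m)) = pt m (3 * m - 1) := by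
  simp only [X1, Perm.mul_apply]
  rw [list_prod_apply_fixed _ _ ?_, Equiv.swap_apply_right,
    Equiv.swap_apply_of_ne_of_ne (pt_ne (by omega) (by omega) (by omega)) (pt_ne (by omega) (by omega) (by omega))]
  intro σ hσ
  obtain ⟨j, hj, rfl⟩ := List.mem_map.mp hσ
  rw [List.mem_range] at hj
  simp only [XC]
  exact c3_apply_ne (pt_ne (by omega) (by omega) (by omega)) (pt_ne (by omega) (by omega) (by omega)) (pt_ne (by omega) (by omega) (by omega))

end evals


theorem prod_one {m : ℕ} (hm : 3 ≤ m) : X1 m * X2 m * X3 m = 1 := by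
  apply Equiv.ext
  intro x
  obtain ⟨v, hv⟩ := x
  have hx : (⟨v, hv⟩ : Fin (3 * m + 1)) = pt m v := Fin.ext (pt_val hv).symm
  rw [hx]
  simp only [Perm.mul_apply, Perm.one_apply]
  by_cases h0 : v = 0
  · subst h0
    rw [X3_fix_bot, X2_apply_0 (v := 0) (by omega) (by omega), X1_o hm]
  by_cases htop : v = 3 * m
  · subst htop
    rw [X3_apply_0 (v := 3 * m) (by omega) (by omega) (by omega),
      X2_apply_1 (v := 3 * m - 2) (by omega) (by omega),
      show 3 * m - 2 + 1 = 3 * m - 1 from by omega, X1_p hm]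
  obtain ⟨i, rfl | rfl | rfl⟩ : ∃ i, v = 3 * i ∨ v = 3 * i + 1 ∨ v = 3 * i + 2 :=
    ⟨v / 3, by omega⟩
  · rw [X3_apply_0 (v := 3 * i) (by omega) (by omega) (by omega),
      X2_apply_1 (v := 3 * i - 2) (by omega) (by omega),
      show 3 * i - 2 + 1 = 3 * i - 1 from by omega,
      X1_a hm (v := 3 * i - 1) (by omega) (by omega)]
    exact congrArg (pt m) (by omega)
  · rw [X3_apply_1 (v := 3 * i + 1) (by omega) (by omega),
      show 3 * i + 1 + 1 = 3 * i + 2 from by omega,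
      X2_apply_2 (v := 3 * i + 2) (by omega) (by omega),
      show 3 * i + 2 - 2 = 3 * i from by omega]
    by_cases hi0 : i = 0
    · subst hi0
      rw [show 3 * 0 = 0 from by norm_num, X1_z hm]
    · rw [X1_b hm (v := 3 * i) (by omega) (by omega) (by omega)]
  · rw [X3_apply_2 (v := 3 * i + 2) (by omega) (by omega),
      show 3 * i + 2 + 1 = 3 * (i + 1) from by omega]
    by_cases him : i = m - 1
    · rw [show 3 * (i + 1) = 3 * m from by omega, X2_fix_top, X1_q hm]
      exact congrArg (pt m) (by omega)
    · rw [X2_apply_0 (v := 3 * (i + 1)) (by omega) (by omega),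
        X1_c hm (v := 3 * (i + 1) + 1) (by omega) (by omega) (by omega)]
      exact congrArg (pt m) (by omega)


/-! ### Disjointness helpers -/

theorem c3_disjoint_c3 {a b c d e f : α} (h1 : a ≠ d) (h2 : a ≠ e) (h3 : a ≠ f)
    (h4 : b ≠ d) (h5 : b ≠ e) (h6 : b ≠ f) (h7 : c ≠ d) (h8 : c ≠ e) (h9 : c ≠ f) :
    Perm.Disjoint (c3 a b c) (c3 d e f) := by
  intro x
  by_cases hx : x = d ∨ x = e ∨ x = f
  · left
    rcases hx with rfl | rfl | rfl
    exacts [c3_apply_ne h1.symm h4.symm h7.symm, c3_apply_ne h2.symm h5.symm h8.symm,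
      c3_apply_ne h3.symm h6.symm h9.symm]
  · right
    push_neg at hx
    exact c3_apply_ne hx.1 hx.2.1 hx.2.2

theorem swap_disjoint_c3 {a b d e f : α} (h1 : a ≠ d) (h2 : a ≠ e) (h3 : a ≠ f)
    (h4 : b ≠ d) (h5 : b ≠ e) (h6 : b ≠ f) :
    Perm.Disjoint (Equiv.swap a b) (c3 d e f) := by
  intro x
  by_cases hx : x = d ∨ x = e ∨ x = f
  · left
    rcases hx with rfl | rfl | rfl
    exacts [Equiv.swap_apply_of_ne_of_ne h1.symm h4.symm,
      Equiv.swap_apply_of_ne_of_ne h2.symm h5.symm,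
      Equiv.swap_apply_of_ne_of_ne h3.symm h6.symm]
  · right
    push_neg at hx
    exact c3_apply_ne hx.1 hx.2.1 hx.2.2

theorem swap_disjoint_swap {a b d e : α} (h1 : a ≠ d) (h2 : a ≠ e)
    (h4 : b ≠ d) (h5 : b ≠ e) :
    Perm.Disjoint (Equiv.swap a b) (Equiv.swap d e) := by
  intro x
  by_cases hx : x = d ∨ x = e
  · left
    rcases hx with rfl | rfl
    exacts [Equiv.swap_apply_of_ne_of_ne h1.symm h4.symm,
      Equiv.swap_apply_of_ne_of_ne h2.symm h5.symm]
  · right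
    push_neg at hx
    exact Equiv.swap_apply_of_ne_of_ne hx.1 hx.2

/-! ### Cycle types -/

theorem X2_cycleType {m : ℕ} (hm : 3 ≤ m) :
    (X2 m).cycleType = Multiset.replicate m 3 := by
  rw [cycleType_eq ((List.range m).map (XA m)) (show _ = X2 m from rfl) ?_ ?_]
  · rw [Multiset.eq_replicate]
    constructor
    · simp
    · intro b hb
      rw [Multiset.mem_coe] at hb
      obtain ⟨σ, hσ, rfl⟩ := List.mem_map.mp hb
      obtain ⟨j, hj, rfl⟩ := List.mem_map.mp hσ
      rw [List.mem_range] at hj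
      simp only [Function.comp_apply, XA]
      exact (c3_isThreeCycle (pt_ne (by omega) (by omega) (by omega)) (pt_ne (by omega) (by omega) (by omega)) (pt_ne (by omega) (by omega) (by omega))).card_support
  · intro σ hσ
    obtain ⟨j, hj, rfl⟩ := List.mem_map.mp hσ
    rw [List.mem_range] at hj
    exact (c3_isThreeCycle (pt_ne (by omega) (by omega) (by omega)) (pt_ne (by omega) (by omega) (by omega)) (pt_ne (by omega) (by omega) (by omega))).isCycle
  · rw [List.pairwise_map]
    refine List.Pairwise.imp_of_mem ?_ List.pairwise_lt_range
    intro i j hi hj hij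
    rw [List.mem_range] at hi hj
    exact c3_disjoint_c3 (pt_ne (by omega) (by omega) (by omega)) (pt_ne (by omega) (by omega) (by omega)) (pt_ne (by omega) (by omega) (by omega)) (pt_ne (by omega) (by omega) (by omega)) (pt_ne (by omega) (by omega) (by omega)) (pt_ne (by omega) (by omega) (by omega)) (pt_ne (by omega) (by omega) (by omega)) (pt_ne (by omega) (by omega) (by omega)) (pt_ne (by omega) (by omega) (by omega))

theorem X3_cycleType {m : ℕ} (hm : 3 ≤ m) :
    (X3 m).cycleType = Multiset.replicate m 3 := by
  rw [cycleType_eq ((List.range m).map (XB m)) (show _ = X3 m from rfl) ?_ ?_]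
  · rw [Multiset.eq_replicate]
    constructor
    · simp
    · intro b hb
      rw [Multiset.mem_coe] at hb
      obtain ⟨σ, hσ, rfl⟩ := List.mem_map.mp hb
      obtain ⟨j, hj, rfl⟩ := List.mem_map.mp hσ
      rw [List.mem_range] at hj
      simp only [Function.comp_apply, XB]
      exact (c3_isThreeCycle (pt_ne (by omega) (by omega) (by omega)) (pt_ne (by omega) (by omega) (by omega)) (pt_ne (by omega) (by omega) (by omega))).card_support
  · intro σ hσ
    obtain ⟨j, hj, rfl⟩ := List.mem_map.mp hσ
    rw [List.mem_range] at hj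
    exact (c3_isThreeCycle (pt_ne (by omega) (by omega) (by omega)) (pt_ne (by omega) (by omega) (by omega)) (pt_ne (by omega) (by omega) (by omega))).isCycle
  · rw [List.pairwise_map]
    refine List.Pairwise.imp_of_mem ?_ List.pairwise_lt_range
    intro i j hi hj hij
    rw [List.mem_range] at hi hj
    exact c3_disjoint_c3 (pt_ne (by omega) (by omega) (by omega)) (pt_ne (by omega) (by omega) (by omega)) (pt_ne (by omega) (by omega) (by omega)) (pt_ne (by omega) (by omega) (by omega)) (pt_ne (by omega) (by omega) (by omega)) (pt_ne (by omega) (by omega) (by omega)) (pt_ne (by omega) (by omega) (by omega)) (pt_ne (by omega) (by omega) (by omega)) (pt_ne (by omega) (by omega) (by omega))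

theorem X1_cycleType {m : ℕ} (hm : 3 ≤ m) :
    (X1 m).cycleType = 2 ::ₘ 2 ::ₘ Multiset.replicate (m - 1) 3 := by
  rw [cycleType_eq (Equiv.swap (pt m 0) (pt m 1) ::
      Equiv.swap (pt m (3 * m - 1)) (pt m (3 * m)) :: ((List.range (m - 1)).map (XC m)))
      (show _ = X1 m by rw [List.prod_cons, List.prod_cons, ← mul_assoc]; rfl) ?_ ?_]
  · rw [List.map_cons, List.map_cons]
    simp only [Function.comp_apply]
    rw [card_support_swap (pt_ne (by omega) (by omega) (by omega)), card_support_swap (pt_ne (by omega) (by omega) (by omega))]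
    rw [← Multiset.cons_coe, ← Multiset.cons_coe]
    congr 1
    congr 1
    rw [Multiset.eq_replicate]
    constructor
    · simp
    · intro b hb
      rw [Multiset.mem_coe] at hb
      obtain ⟨σ, hσ, rfl⟩ := List.mem_map.mp hb
      obtain ⟨j, hj, rfl⟩ := List.mem_map.mp hσ
      rw [List.mem_range] at hj
      simp only [Function.comp_apply, XC]
      exact (c3_isThreeCycle (pt_ne (by omega) (by omega) (by omega)) (pt_ne (by omega) (by omega) (by omega)) (pt_ne (by omega) (by omega) (by omega))).card_support
  · intro σ hσ
    simp only [List.mem_cons] at hσ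
    rcases hσ with rfl | rfl | hσ
    · exact isCycle_swap (pt_ne (by omega) (by omega) (by omega))
    · exact isCycle_swap (pt_ne (by omega) (by omega) (by omega))
    · obtain ⟨j, hj, rfl⟩ := List.mem_map.mp hσ
      rw [List.mem_range] at hj
      exact (c3_isThreeCycle (pt_ne (by omega) (by omega) (by omega)) (pt_ne (by omega) (by omega) (by omega)) (pt_ne (by omega) (by omega) (by omega))).isCycle
  · rw [List.pairwise_cons, List.pairwise_cons]
    refine ⟨?_, ?_, ?_⟩
    · intro τ hτ
      simp only [List.mem_cons] at hτ
      rcases hτ with rfl | hτ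
      · exact swap_disjoint_swap (pt_ne (by omega) (by omega) (by omega)) (pt_ne (by omega) (by omega) (by omega)) (pt_ne (by omega) (by omega) (by omega)) (pt_ne (by omega) (by omega) (by omega))
      · obtain ⟨j, hj, rfl⟩ := List.mem_map.mp hτ
        rw [List.mem_range] at hj
        exact swap_disjoint_c3 (pt_ne (by omega) (by omega) (by omega)) (pt_ne (by omega) (by omega) (by omega)) (pt_ne (by omega) (by omega) (by omega)) (pt_ne (by omega) (by omega) (by omega)) (pt_ne (by omega) (by omega) (by omega)) (pt_ne (by omega) (by omega) (by omega))
    · intro τ hτ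
      obtain ⟨j, hj, rfl⟩ := List.mem_map.mp hτ
      rw [List.mem_range] at hj
      exact swap_disjoint_c3 (pt_ne (by omega) (by omega) (by omega)) (pt_ne (by omega) (by omega) (by omega)) (pt_ne (by omega) (by omega) (by omega)) (pt_ne (by omega) (by omega) (by omega)) (pt_ne (by omega) (by omega) (by omega)) (pt_ne (by omega) (by omega) (by omega))
    · rw [List.pairwise_map]
      refine List.Pairwise.imp_of_mem ?_ List.pairwise_lt_range
      intro i j hi hj hij
      rw [List.mem_range] at hi hj
      exact c3_disjoint_c3 (pt_ne (by omega) (by omega) (by omega)) (pt_ne (by omega) (by omega) (by omega)) (pt_ne (by omega) (by omega) (by omega)) (pt_ne (by omega) (by omega) (by omega)) (pt_ne (by omega) (by omega) (by omega)) (pt_ne (by omega) (by omega) (by omega)) (pt_ne (by omega) (by omega) (by omega)) (pt_ne (by omega) (by omega) (by omega)) (pt_ne (by omega) (by omega) (by omega))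


section tw

variable {m : ℕ} (hm : 3 ≤ m)
include hm

theorem X1_cube : X1 m ^ 3 =
    Equiv.swap (pt m 0) (pt m 1) * Equiv.swap (pt m (3 * m - 1)) (pt m (3 * m)) := by
  apply Equiv.ext
  intro x
  obtain ⟨v, hv⟩ := x
  have hx : (⟨v, hv⟩ : Fin (3 * m + 1)) = pt m v := Fin.ext (pt_val hv).symm
  rw [hx]
  simp only [pow_succ, pow_zero, one_mul, Perm.mul_apply]
  by_cases h0 : v = 0
  · subst h0
    rw [X1_z hm, X1_o hm, X1_z hm, Equiv.swap_apply_of_ne_of_ne (pt_ne (by omega) (by omega) (by omega)) (pt_ne (by omega) (by omega) (by omega)),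
      Equiv.swap_apply_left]
  by_cases h1 : v = 1
  · subst h1
    rw [X1_o hm, X1_z hm, X1_o hm, Equiv.swap_apply_of_ne_of_ne (pt_ne (by omega) (by omega) (by omega)) (pt_ne (by omega) (by omega) (by omega)),
      Equiv.swap_apply_right]
  by_cases hp : v = 3 * m - 1
  · subst hp
    rw [X1_p hm, X1_q hm, X1_p hm, Equiv.swap_apply_left,
      Equiv.swap_apply_of_ne_of_ne (pt_ne (by omega) (by omega) (by omega)) (pt_ne (by omega) (by omega) (by omega))]
  by_cases hq : v = 3 * m
  · subst hq
    rw [X1_q hm, X1_p hm, X1_q hm, Equiv.swap_apply_right,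
      Equiv.swap_apply_of_ne_of_ne (pt_ne (by omega) (by omega) (by omega)) (pt_ne (by omega) (by omega) (by omega))]
  have hfix : Equiv.swap (pt m 0) (pt m 1)
      (Equiv.swap (pt m (3 * m - 1)) (pt m (3 * m)) (pt m v)) = pt m v := by
    rw [Equiv.swap_apply_of_ne_of_ne (pt_ne (by omega) (by omega) (by omega)) (pt_ne (by omega) (by omega) (by omega)), Equiv.swap_apply_of_ne_of_ne (pt_ne (by omega) (by omega) (by omega)) (pt_ne (by omega) (by omega) (by omega))]
  rw [hfix]
  rcases (show v % 3 = 0 ∨ v % 3 = 1 ∨ v % 3 = 2 from by omega) with h3 | h3 | h3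
  · rw [X1_b hm (v := v) h3 (by omega) (by omega),
      X1_c hm (v := v + 1) (by omega) (by omega) (by omega),
      show v + 1 - 2 = v - 1 from by omega,
      X1_a hm (v := v - 1) (by omega) (by omega)]
    exact congrArg (pt m) (by omega)
  · rw [X1_c hm (v := v) h3 (by omega) (by omega),
      X1_a hm (v := v - 2) (by omega) (by omega),
      show v - 2 + 1 = v - 1 from by omega,
      X1_b hm (v := v - 1) (by omega) (by omega) (by omega)]
    exact congrArg (pt m) (by omega)
  · rw [X1_a hm (v := v) h3 (by omega),
      X1_b hm (v := v + 1) (by omega) (by omega) (by omega),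
      show v + 1 + 1 = v + 2 from by omega,
      X1_c hm (v := v + 2) (by omega) (by omega) (by omega)]
    exact congrArg (pt m) (by omega)

end tw

def W (m : ℕ) : Perm (Fin (3 * m + 1)) :=
  X3 m * X2 m * X3 m * (X2 m)⁻¹ * X3 m * X2 m * (X3 m)⁻¹

section wev

variable {m : ℕ} (hm : 3 ≤ m)
include hm

theorem W_0 : W m (pt m 0) = pt m 0 := by
  have s2 : X2 m (pt m 0) = pt m 1 := by
    rw [X2_apply_0 (v := 0) (by omega) (by omega)]
  have s3 : X3 m (pt m 1) = pt m 2 := by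
    rw [X3_apply_1 (v := 1) (by omega) (by omega)]
  have s4 : (X2 m)⁻¹ (pt m 2) = pt m 1 := inv_eval _ (by
    rw [X2_apply_1 (v := 1) (by omega) (by omega)])
  have s5 : X2 m (pt m 2) = pt m 0 := by
    rw [X2_apply_2 (v := 2) (by omega) (by omega)]
  simp only [W, Perm.mul_apply]
  rw [inv_eval _ X3_fix_bot, s2, s3, s4, s3, s5, X3_fix_bot]

theorem W_1 : W m (pt m 1) = pt m 1 := by
  have e3 : X3 m (pt m 3) = pt m 1 := by
    rw [X3_apply_0 (v := 3) (by omega) (by omega) (by omega)]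
  have s1 : (X3 m)⁻¹ (pt m 1) = pt m 3 := inv_eval _ e3
  have s2 : X2 m (pt m 3) = pt m 4 := by
    rw [X2_apply_0 (v := 3) (by omega) (by omega)]
  have s3 : X3 m (pt m 4) = pt m 5 := by
    rw [X3_apply_1 (v := 4) (by omega) (by omega)]
  have s4 : (X2 m)⁻¹ (pt m 5) = pt m 4 := inv_eval _ (by
    rw [X2_apply_1 (v := 4) (by omega) (by omega)])
  have s5 : X2 m (pt m 5) = pt m 3 := by
    rw [X2_apply_2 (v := 5) (by omega) (by omega)]
  simp only [W, Perm.mul_apply]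
  rw [s1, s2, s3, s4, s3, s5, e3]

theorem W_p : W m (pt m (3 * m - 1)) = pt m (3 * m) := by
  have a2 : X2 m (pt m (3 * m - 2)) = pt m (3 * m - 1) := by
    rw [X2_apply_1 (v := 3 * m - 2) (by omega) (by omega)]
    exact congrArg (pt m) (by omega)
  have a3 : X3 m (pt m (3 * m - 1)) = pt m (3 * m) := by
    rw [X3_apply_2 (v := 3 * m - 1) (by omega) (by omega)]
    exact congrArg (pt m) (by omega)
  have a1 : (X3 m)⁻¹ (pt m (3 * m - 1)) = pt m (3 * m - 2) := inv_eval _ (by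
    rw [X3_apply_1 (v := 3 * m - 2) (by omega) (by omega)]
    exact congrArg (pt m) (by omega))
  have a4 : (X2 m)⁻¹ (pt m (3 * m)) = pt m (3 * m) := inv_eval _ X2_fix_top
  have a5 : X3 m (pt m (3 * m)) = pt m (3 * m - 2) := by
    rw [X3_apply_0 (v := 3 * m) (by omega) (by omega) (by omega)]
  simp only [W, Perm.mul_apply]
  rw [a1, a2, a3, a4, a5, a2, a3]

theorem W_q : W m (pt m (3 * m)) = pt m (3 * m - 6) := by
  have a3 : X3 m (pt m (3 * m - 1)) = pt m (3 * m) := by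
    rw [X3_apply_2 (v := 3 * m - 1) (by omega) (by omega)]
    exact congrArg (pt m) (by omega)
  have b1 : (X3 m)⁻¹ (pt m (3 * m)) = pt m (3 * m - 1) := inv_eval _ a3
  have b2 : X2 m (pt m (3 * m - 1)) = pt m (3 * m - 3) := by
    rw [X2_apply_2 (v := 3 * m - 1) (by omega) (by omega)]
    exact congrArg (pt m) (by omega)
  have b3 : X3 m (pt m (3 * m - 3)) = pt m (3 * m - 5) := by
    rw [X3_apply_0 (v := 3 * m - 3) (by omega) (by omega) (by omega)]
    exact congrArg (pt m) (by omega)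
  have b4 : (X2 m)⁻¹ (pt m (3 * m - 5)) = pt m (3 * m - 6) := inv_eval _ (by
    rw [X2_apply_0 (v := 3 * m - 6) (by omega) (by omega)]
    exact congrArg (pt m) (by omega))
  have b5 : X3 m (pt m (3 * m - 6)) = pt m (3 * m - 8) := by
    rw [X3_apply_0 (v := 3 * m - 6) (by omega) (by omega) (by omega)]
    exact congrArg (pt m) (by omega)
  have b6 : X2 m (pt m (3 * m - 8)) = pt m (3 * m - 7) := by
    rw [X2_apply_1 (v := 3 * m - 8) (by omega) (by omega)]
    exact congrArg (pt m) (by omega)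
  have b7 : X3 m (pt m (3 * m - 7)) = pt m (3 * m - 6) := by
    rw [X3_apply_2 (v := 3 * m - 7) (by omega) (by omega)]
    exact congrArg (pt m) (by omega)
  simp only [W, Perm.mul_apply]
  rw [b1, b2, b3, b4, b5, b6, b7]

theorem tau_eq : X1 m ^ 3 * (W m * X1 m ^ 3 * (W m)⁻¹) =
    c3 (pt m (3 * m - 1)) (pt m (3 * m)) (pt m (3 * m - 6)) := by
  have key : W m * (Equiv.swap (pt m 0) (pt m 1) *
      Equiv.swap (pt m (3 * m - 1)) (pt m (3 * m))) * (W m)⁻¹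
      = Equiv.swap (pt m 0) (pt m 1) * Equiv.swap (pt m (3 * m)) (pt m (3 * m - 6)) := by
    have e : W m * (Equiv.swap (pt m 0) (pt m 1) *
        Equiv.swap (pt m (3 * m - 1)) (pt m (3 * m))) * (W m)⁻¹
        = (W m * Equiv.swap (pt m 0) (pt m 1) * (W m)⁻¹) *
          (W m * Equiv.swap (pt m (3 * m - 1)) (pt m (3 * m)) * (W m)⁻¹) := by
      group
    rw [e, ← Equiv.swap_apply_apply, ← Equiv.swap_apply_apply, W_0 hm, W_1 hm, W_p hm, W_q hm]
  rw [X1_cube hm, key]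
  have hcomm : Equiv.swap (pt m (3 * m - 1)) (pt m (3 * m)) * Equiv.swap (pt m 0) (pt m 1)
      = Equiv.swap (pt m 0) (pt m 1) * Equiv.swap (pt m (3 * m - 1)) (pt m (3 * m)) :=
    ((swap_disjoint_swap (pt_ne (by omega) (by omega) (by omega)) (pt_ne (by omega) (by omega) (by omega)) (pt_ne (by omega) (by omega) (by omega)) (pt_ne (by omega) (by omega) (by omega))).commute.symm).eq
  calc Equiv.swap (pt m 0) (pt m 1) * Equiv.swap (pt m (3 * m - 1)) (pt m (3 * m)) *
      (Equiv.swap (pt m 0) (pt m 1) * Equiv.swap (pt m (3 * m)) (pt m (3 * m - 6)))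
      = Equiv.swap (pt m 0) (pt m 1) *
        (Equiv.swap (pt m (3 * m - 1)) (pt m (3 * m)) * Equiv.swap (pt m 0) (pt m 1)) *
        Equiv.swap (pt m (3 * m)) (pt m (3 * m - 6)) := by group
    _ = Equiv.swap (pt m 0) (pt m 1) *
        (Equiv.swap (pt m 0) (pt m 1) * Equiv.swap (pt m (3 * m - 1)) (pt m (3 * m))) *
        Equiv.swap (pt m (3 * m)) (pt m (3 * m - 6)) := by rw [hcomm]
    _ = (Equiv.swap (pt m 0) (pt m 1) * Equiv.swap (pt m 0) (pt m 1)) *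
        (Equiv.swap (pt m (3 * m - 1)) (pt m (3 * m)) *
          Equiv.swap (pt m (3 * m)) (pt m (3 * m - 6))) := by group
    _ = c3 (pt m (3 * m - 1)) (pt m (3 * m)) (pt m (3 * m - 6)) := by
        rw [Equiv.swap_mul_self, one_mul]; rfl

end wev


theorem gen_main {m : ℕ} (hm : 3 ≤ m) (H : Subgroup (Perm (Fin (3 * m + 1))))
    (h1 : X1 m ∈ H) (h2 : X2 m ∈ H) (h3 : X3 m ∈ H) :
    ∀ a b c : Fin (3 * m + 1), a ≠ b → b ≠ c → a ≠ c → c3 a b c ∈ H := by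
  have hW : W m ∈ H := by
    unfold W
    exact mul_mem (mul_mem (mul_mem (mul_mem (mul_mem (mul_mem h3 h2) h3) (inv_mem h2)) h3)
      h2) (inv_mem h3)
  have lk7 : L3 H (pt m (3 * m - 1)) (pt m (3 * m)) (pt m (3 * m - 6)) := by
    show c3 _ _ _ ∈ H
    rw [← tau_eq hm]
    exact mul_mem (pow_mem h1 3) (mul_mem (mul_mem hW (pow_mem h1 3)) (inv_mem hW))
  have t6 : L3 H (pt m (3 * m)) (pt m (3 * m - 1)) (pt m (3 * m - 5)) := by
    have h := lk7.conj h1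
    rwa [X1_p hm, X1_q hm, X1_b hm (v := 3 * m - 6) (by omega) (by omega) (by omega),
      show 3 * m - 6 + 1 = 3 * m - 5 from by omega] at h
  have t8 : L3 H (pt m (3 * m - 1)) (pt m (3 * m)) (pt m (3 * m - 7)) := by
    have h := t6.conj h1
    rwa [X1_q hm, X1_p hm, X1_c hm (v := 3 * m - 5) (by omega) (by omega) (by omega),
      show 3 * m - 5 - 2 = 3 * m - 7 from by omega] at h
  have hX2e1 : X2 m (pt m (3 * m - 1)) = pt m (3 * m - 3) := by
    rw [X2_apply_2 (v := 3 * m - 1) (by omega) (by omega)]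
    exact congrArg (pt m) (by omega)
  have hX2e2 : X2 m (pt m (3 * m - 6)) = pt m (3 * m - 5) := by
    rw [X2_apply_0 (v := 3 * m - 6) (by omega) (by omega)]
    exact congrArg (pt m) (by omega)
  have hX2e3 : X2 m (pt m (3 * m - 5)) = pt m (3 * m - 4) := by
    rw [X2_apply_1 (v := 3 * m - 5) (by omega) (by omega)]
    exact congrArg (pt m) (by omega)
  have d1 : L3 H (pt m (3 * m - 3)) (pt m (3 * m)) (pt m (3 * m - 5)) := by
    have h := lk7.conj h2
    rwa [hX2e1, X2_fix_top, hX2e2] at h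
  have d2 : L3 H (pt m (3 * m)) (pt m (3 * m - 3)) (pt m (3 * m - 4)) := by
    have h := t6.conj h2
    rwa [X2_fix_top, hX2e1, hX2e3] at h
  have d3 : L3 H (pt m (3 * m - 2)) (pt m (3 * m)) (pt m (3 * m - 4)) := by
    have h := lk7.conj (inv_mem h2)
    rwa [inv_eval _ (show X2 m (pt m (3 * m - 2)) = pt m (3 * m - 1) from by
        rw [X2_apply_1 (v := 3 * m - 2) (by omega) (by omega)]
        exact congrArg (pt m) (by omega)),
      inv_eval _ X2_fix_top,
      inv_eval _ (show X2 m (pt m (3 * m - 4)) = pt m (3 * m - 6) from by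
        rw [X2_apply_2 (v := 3 * m - 4) (by omega) (by omega)]
        exact congrArg (pt m) (by omega))] at h
  -- base: ALT3 on the 8 top points
  have S0 : ALT3 H ({pt m (3 * m - 1), pt m (3 * m), pt m (3 * m - 6)} : Set _) :=
    ALT3_triple (pt_ne (by omega) (by omega) (by omega)) (pt_ne (by omega) (by omega) (by omega)) (pt_ne (by omega) (by omega) (by omega)) lk7
  have S1 := S0.insert (Set.mem_insert_of_mem _ (Set.mem_insert _ _)) (Set.mem_insert _ _)
    (pt_ne (by omega) (by omega) (by omega)) (by
      intro hmem
      simp only [Set.mem_insert_iff, Set.mem_singleton_iff] at hmem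
      rcases hmem with h | h | h
      exacts [(pt_ne (by omega) (by omega) (by omega)) h, (pt_ne (by omega) (by omega) (by omega)) h, (pt_ne (by omega) (by omega) (by omega)) h]) t6
  have S2 := S1.insert
    (Set.mem_insert_of_mem _ (Set.mem_insert_of_mem _ (Set.mem_insert _ _)))
    (Set.mem_insert _ _) (pt_ne (by omega) (by omega) (by omega)) (by
      intro hmem
      simp only [Set.mem_insert_iff, Set.mem_singleton_iff] at hmem
      rcases hmem with h | h | h | h
      exacts [(pt_ne (by omega) (by omega) (by omega)) h, (pt_ne (by omega) (by omega) (by omega)) h, (pt_ne (by omega) (by omega) (by omega)) h, (pt_ne (by omega) (by omega) (by omega)) h])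
    (d1.rot (pt_ne (by omega) (by omega) (by omega)) (pt_ne (by omega) (by omega) (by omega)) (pt_ne (by omega) (by omega) (by omega)))
  have S3 := S2.insert
    (Set.mem_insert_of_mem _
      (Set.mem_insert_of_mem _ (Set.mem_insert_of_mem _ (Set.mem_insert _ _))))
    (Set.mem_insert _ _) (pt_ne (by omega) (by omega) (by omega)) (by
      intro hmem
      simp only [Set.mem_insert_iff, Set.mem_singleton_iff] at hmem
      rcases hmem with h | h | h | h | h
      exacts [(pt_ne (by omega) (by omega) (by omega)) h, (pt_ne (by omega) (by omega) (by omega)) h, (pt_ne (by omega) (by omega) (by omega)) h, (pt_ne (by omega) (by omega) (by omega)) h, (pt_ne (by omega) (by omega) (by omega)) h]) d2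
  have S4 := S3.insert
    (Set.mem_insert_of_mem _ (Set.mem_insert_of_mem _
      (Set.mem_insert_of_mem _ (Set.mem_insert_of_mem _ (Set.mem_insert _ _)))))
    (Set.mem_insert _ _) (pt_ne (by omega) (by omega) (by omega)) (by
      intro hmem
      simp only [Set.mem_insert_iff, Set.mem_singleton_iff] at hmem
      rcases hmem with h | h | h | h | h | h
      exacts [(pt_ne (by omega) (by omega) (by omega)) h, (pt_ne (by omega) (by omega) (by omega)) h, (pt_ne (by omega) (by omega) (by omega)) h, (pt_ne (by omega) (by omega) (by omega)) h, (pt_ne (by omega) (by omega) (by omega)) h, (pt_ne (by omega) (by omega) (by omega)) h])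
    (d3.rot (pt_ne (by omega) (by omega) (by omega)) (pt_ne (by omega) (by omega) (by omega)) (pt_ne (by omega) (by omega) (by omega)))
  have S5 := S4.insert
    (Set.mem_insert_of_mem _ (Set.mem_insert_of_mem _ (Set.mem_insert_of_mem _
      (Set.mem_insert_of_mem _ (Set.mem_insert _ _)))))
    (Set.mem_insert_of_mem _ (Set.mem_insert_of_mem _ (Set.mem_insert_of_mem _
      (Set.mem_insert_of_mem _ (Set.mem_insert_of_mem _ (Set.mem_insert _ _))))))
    (pt_ne (by omega) (by omega) (by omega)) (by
      intro hmem
      simp only [Set.mem_insert_iff, Set.mem_singleton_iff] at hmem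
      rcases hmem with h | h | h | h | h | h | h
      exacts [(pt_ne (by omega) (by omega) (by omega)) h, (pt_ne (by omega) (by omega) (by omega)) h, (pt_ne (by omega) (by omega) (by omega)) h, (pt_ne (by omega) (by omega) (by omega)) h, (pt_ne (by omega) (by omega) (by omega)) h, (pt_ne (by omega) (by omega) (by omega)) h, (pt_ne (by omega) (by omega) (by omega)) h]) t8
  have base : ALT3 H {x : Fin (3 * m + 1) | 3 * m - 7 ≤ x.val} := by
    refine S5.mono ?_
    intro x hx
    simp only [Set.mem_setOf_eq] at hx
    rcases (show x.val = 3 * m - 7 ∨ x.val = 3 * m - 2 ∨ x.val = 3 * m - 4 ∨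
        x.val = 3 * m - 3 ∨ x.val = 3 * m - 5 ∨ x.val = 3 * m - 1 ∨ x.val = 3 * m ∨
        x.val = 3 * m - 6 from by have := x.isLt; omega) with h | h | h | h | h | h | h | h
    · exact (Fin.ext (h.trans (pt_val (by omega)).symm) : x = pt m (3 * m - 7)) ▸
        Set.mem_insert _ _
    · exact (Fin.ext (h.trans (pt_val (by omega)).symm) : x = pt m (3 * m - 2)) ▸
        Set.mem_insert_of_mem _ (Set.mem_insert _ _)
    · exact (Fin.ext (h.trans (pt_val (by omega)).symm) : x = pt m (3 * m - 4)) ▸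
        Set.mem_insert_of_mem _ (Set.mem_insert_of_mem _ (Set.mem_insert _ _))
    · exact (Fin.ext (h.trans (pt_val (by omega)).symm) : x = pt m (3 * m - 3)) ▸
        Set.mem_insert_of_mem _ (Set.mem_insert_of_mem _
          (Set.mem_insert_of_mem _ (Set.mem_insert _ _)))
    · exact (Fin.ext (h.trans (pt_val (by omega)).symm) : x = pt m (3 * m - 5)) ▸
        Set.mem_insert_of_mem _ (Set.mem_insert_of_mem _ (Set.mem_insert_of_mem _
          (Set.mem_insert_of_mem _ (Set.mem_insert _ _))))
    · exact (Fin.ext (h.trans (pt_val (by omega)).symm) : x = pt m (3 * m - 1)) ▸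
        Set.mem_insert_of_mem _ (Set.mem_insert_of_mem _ (Set.mem_insert_of_mem _
          (Set.mem_insert_of_mem _ (Set.mem_insert_of_mem _ (Set.mem_insert _ _)))))
    · exact (Fin.ext (h.trans (pt_val (by omega)).symm) : x = pt m (3 * m)) ▸
        Set.mem_insert_of_mem _ (Set.mem_insert_of_mem _ (Set.mem_insert_of_mem _
          (Set.mem_insert_of_mem _ (Set.mem_insert_of_mem _ (Set.mem_insert_of_mem _
            (Set.mem_insert _ _))))))
    · exact (Fin.ext (h.trans (pt_val (by omega)).symm) : x = pt m (3 * m - 6)) ▸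
        Set.mem_insert_of_mem _ (Set.mem_insert_of_mem _ (Set.mem_insert_of_mem _
          (Set.mem_insert_of_mem _ (Set.mem_insert_of_mem _ (Set.mem_insert_of_mem _
            (Set.mem_insert_of_mem _ rfl))))))
  have suffix : ∀ d : ℕ, ALT3 H {x : Fin (3 * m + 1) | 3 * m - 7 - d ≤ x.val} := by
    intro d
    induction d with
    | zero => simpa using base
    | succ d ih =>
      by_cases hd : 3 * m - 7 ≤ d
      · rw [show 3 * m - 7 - (d + 1) = 3 * m - 7 - d from by omega]
        exact ih
      · have hjd : 3 * m - 7 - d = (3 * m - 7 - (d + 1)) + 1 := by omega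
        set j := 3 * m - 7 - (d + 1) with hj
        have hjle : j ≤ 3 * m - 8 := by omega
        rw [hjd] at ih
        have hmem : ∀ k, j + 1 ≤ k → k ≤ 3 * m →
            pt m k ∈ {x : Fin (3 * m + 1) | j + 1 ≤ x.val} := by
          intro k hk1 hk2
          simp only [Set.mem_setOf_eq]
          rw [pt_val (by omega)]
          exact hk1
        have hnm : pt m j ∉ {x : Fin (3 * m + 1) | j + 1 ≤ x.val} := by
          simp only [Set.mem_setOf_eq]
          rw [pt_val (by omega)]
          omega
        have ihc : L3 H (pt m (j + 1)) (pt m (j + 2)) (pt m (j + 3)) :=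
          ih _ (hmem _ (by omega) (by omega)) _ (hmem _ (by omega) (by omega)) _
            (hmem _ (by omega) (by omega)) (pt_ne (by omega) (by omega) (by omega)) (pt_ne (by omega) (by omega) (by omega)) (pt_ne (by omega) (by omega) (by omega))
        have hsub : {x : Fin (3 * m + 1) | j ≤ x.val} ⊆
            Insert.insert (pt m j) {x : Fin (3 * m + 1) | j + 1 ≤ x.val} := by
          intro x hx
          simp only [Set.mem_setOf_eq] at hx
          by_cases hxj : x.val = j
          · exact Set.mem_insert_iff.mpr (Or.inl (Fin.ext (hxj.trans (pt_val (by omega)).symm)))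
          · exact Set.mem_insert_of_mem _ (by simp only [Set.mem_setOf_eq]; omega)
        rcases (show j % 3 = 0 ∨ j % 3 = 1 ∨ j % 3 = 2 from by omega) with h3' | h3' | h3'
        · have cert : L3 H (pt m j) (pt m (j + 1)) (pt m (j + 5)) := by
            have h := ihc.conj (inv_mem h2)
            rwa [inv_eval _ (show X2 m (pt m j) = pt m (j + 1) from by
                rw [X2_apply_0 (v := j) (by omega) (by omega)]),
              inv_eval _ (show X2 m (pt m (j + 1)) = pt m (j + 2) from by
                rw [X2_apply_1 (v := j + 1) (by omega) (by omega)]),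
              inv_eval _ (show X2 m (pt m (j + 5)) = pt m (j + 3) from by
                rw [X2_apply_2 (v := j + 5) (by omega) (by omega)]
                exact congrArg (pt m) (by omega))] at h
          have hins := ih.insert (hmem _ (by omega) (by omega)) (hmem _ (by omega) (by omega))
            (pt_ne (by omega) (by omega) (by omega)) hnm (cert.rot (pt_ne (by omega) (by omega) (by omega)) (pt_ne (by omega) (by omega) (by omega)) (pt_ne (by omega) (by omega) (by omega)))
          exact hins.mono hsub
        · have cert : L3 H (pt m j) (pt m (j + 1)) (pt m (j + 5)) := by
            have h := ihc.conj (inv_mem h3)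
            rwa [inv_eval _ (show X3 m (pt m j) = pt m (j + 1) from by
                rw [X3_apply_1 (v := j) (by omega) (by omega)]),
              inv_eval _ (show X3 m (pt m (j + 1)) = pt m (j + 2) from by
                rw [X3_apply_2 (v := j + 1) (by omega) (by omega)]),
              inv_eval _ (show X3 m (pt m (j + 5)) = pt m (j + 3) from by
                rw [X3_apply_0 (v := j + 5) (by omega) (by omega) (by omega)]
                exact congrArg (pt m) (by omega))] at h
          have hins := ih.insert (hmem _ (by omega) (by omega)) (hmem _ (by omega) (by omega))
            (pt_ne (by omega) (by omega) (by omega)) hnm (cert.rot (pt_ne (by omega) (by omega) (by omega)) (pt_ne (by omega) (by omega) (by omega)) (pt_ne (by omega) (by omega) (by omega)))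
          exact hins.mono hsub
        · have cert : L3 H (pt m j) (pt m (j + 4)) (pt m (j + 2)) := by
            have h := ihc.conj (inv_mem h3)
            rwa [inv_eval _ (show X3 m (pt m j) = pt m (j + 1) from by
                rw [X3_apply_2 (v := j) (by omega) (by omega)]),
              inv_eval _ (show X3 m (pt m (j + 4)) = pt m (j + 2) from by
                rw [X3_apply_0 (v := j + 4) (by omega) (by omega) (by omega)]
                exact congrArg (pt m) (by omega)),
              inv_eval _ (show X3 m (pt m (j + 2)) = pt m (j + 3) from by
                rw [X3_apply_1 (v := j + 2) (by omega) (by omega)])] at h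
          have hins := ih.insert (hmem _ (by omega) (by omega)) (hmem _ (by omega) (by omega))
            (pt_ne (by omega) (by omega) (by omega)) hnm (cert.rot (pt_ne (by omega) (by omega) (by omega)) (pt_ne (by omega) (by omega) (by omega)) (pt_ne (by omega) (by omega) (by omega)))
          exact hins.mono hsub
  intro a b c hab hbc hac
  have hall := suffix (3 * m - 7)
  have h0 : ∀ x : Fin (3 * m + 1), x ∈ {x : Fin (3 * m + 1) | 3 * m - 7 - (3 * m - 7) ≤ x.val} := by
    intro x
    simp only [Set.mem_setOf_eq]
    omega
  exact hall a (h0 a) b (h0 b) c (h0 c) hab hbc hac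


theorem isThreeCycle_eq_c3 {β : Type*} [DecidableEq β] [Fintype β] {σ : Perm β}
    (h : IsThreeCycle σ) :
    ∃ a b c, a ≠ b ∧ b ≠ c ∧ a ≠ c ∧ σ = c3 a b c := by
  obtain ⟨a, ha, -⟩ := h.isCycle
  have h3 : σ ^ 3 = 1 := by
    rw [← h.orderOf]
    exact pow_orderOf_eq_one σ
  have hfix : σ (σ (σ a)) = a := by
    have : (σ ^ 3) a = a := by rw [h3]; rfl
    simpa [pow_succ, Perm.mul_apply] using this
  have hab : a ≠ σ a := Ne.symm ha
  have hbc : σ a ≠ σ (σ a) := fun hh => ha (σ.injective hh.symm)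
  have hac : a ≠ σ (σ a) := by
    intro hh
    apply ha
    have := congrArg σ hh
    rw [hfix] at this
    exact this
  refine ⟨a, σ a, σ (σ a), hab, hbc, hac, ?_⟩
  have hcard : ({a, σ a, σ (σ a)} : Finset β).card = 3 := by
    rw [Finset.card_insert_of_notMem (by simp [hab, hac]),
      Finset.card_insert_of_notMem (by simp [hbc]), Finset.card_singleton]
  have hsub : ({a, σ a, σ (σ a)} : Finset β) ⊆ σ.support := by
    intro x hx
    simp only [Finset.mem_insert, Finset.mem_singleton] at hx
    rcases hx with rfl | rfl | rfl
    · exact Perm.mem_support.mpr ha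
    · exact Perm.mem_support.mpr hbc.symm
    · exact Perm.mem_support.mpr (by rw [hfix]; exact hac)
  have hsupp : σ.support = {a, σ a, σ (σ a)} :=
    (Finset.eq_of_subset_of_card_le hsub (by rw [hcard, h.card_support])).symm
  ext x
  by_cases hx1 : x = a
  · subst hx1
    rw [c3_apply_a hab hac]
  by_cases hx2 : x = σ a
  · subst hx2
    rw [c3_apply_b hac hbc]
  by_cases hx3 : x = σ (σ a)
  · subst hx3
    rw [c3_apply_c, hfix]
  · rw [c3_apply_ne hx1 hx2 hx3]
    have : x ∉ σ.support := by
      rw [hsupp]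
      simp [hx1, hx2, hx3]
    exact Perm.notMem_support.mp this

theorem alt_le {m : ℕ} (hm : 3 ≤ m) :
    alternatingGroup (Fin (3 * m + 1)) ≤ Subgroup.closure {X1 m, X2 m, X3 m} := by
  set H := Subgroup.closure ({X1 m, X2 m, X3 m} : Set (Perm (Fin (3 * m + 1)))) with hH
  have h1 : X1 m ∈ H := Subgroup.subset_closure (Set.mem_insert _ _)
  have h2 : X2 m ∈ H := Subgroup.subset_closure (Set.mem_insert_of_mem _ (Set.mem_insert _ _))
  have h3 : X3 m ∈ H :=
    Subgroup.subset_closure (Set.mem_insert_of_mem _ (Set.mem_insert_of_mem _ rfl))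
  rw [← closure_three_cycles_eq_alternating]
  refine (Subgroup.closure_le _).mpr ?_
  intro σ hσ
  obtain ⟨a, b, c, hab, hbc, hac, rfl⟩ := isThreeCycle_eq_c3 hσ
  exact gen_main hm H h1 h2 h3 a b c hab hbc hac

end F23

/-- **Lemma 9.2, case F2.3**: for every `ℓ ≥ 9` with `ℓ ≡ 1 (mod 3)` there is a
product-one triple `x₁·x₂·x₃ = 1` in `Sym(ℓ)` generating a subgroup containing
`Alt(ℓ)`, where `x₁` has cycle type `[2²,3^{(ℓ−4)/3}]` (no fixed points) and
`x₂, x₃` both have cycle type `[1,3^{(ℓ−1)/3}]` (one fixed point). -/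
theorem statement18 (ℓ : ℕ) (hℓ : 9 ≤ ℓ) (h3 : ℓ % 3 = 1) :
    ∃ x₁ x₂ x₃ : Equiv.Perm (Fin ℓ),
      x₁ * x₂ * x₃ = 1 ∧
      alternatingGroup (Fin ℓ) ≤ Subgroup.closure {x₁, x₂, x₃} ∧
      x₁.cycleType = 2 ::ₘ 2 ::ₘ Multiset.replicate ((ℓ - 4) / 3) 3 ∧
      x₂.cycleType = Multiset.replicate ((ℓ - 1) / 3) 3 ∧
      x₃.cycleType = Multiset.replicate ((ℓ - 1) / 3) 3 := by
  obtain ⟨m, rfl⟩ : ∃ m, ℓ = 3 * m + 1 := ⟨ℓ / 3, by omega⟩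
  have hm : 3 ≤ m := by omega
  refine ⟨F23.X1 m, F23.X2 m, F23.X3 m, F23.prod_one hm, F23.alt_le hm, ?_, ?_, ?_⟩
  · rw [show (3 * m + 1 - 4) / 3 = m - 1 from by omega]
    exact F23.X1_cycleType hm
  · rw [show (3 * m + 1 - 1) / 3 = m from by omega]
    exact F23.X2_cycleType hm
  · rw [show (3 * m + 1 - 1) / 3 = m from by omega]
    exact F23.X3_cycleType hm
end
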